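/- For every $q^0 \in [0,\infty)^V$ there exists a solution of the complete-graph initial value problem with initial condition $q^0$; that is, a continuous $f:[0,\infty)\to[0,\infty)^V$ with $f(0)=q^0$, $s(f(t))=\max(s(q^0)+(s(\lambda)-1)t,0)$ for all $t \ge 0$, and $f'(t)=g(f(t))$ at every $t>0$ with $f(t)\neq 0$. -/

import Mathlib

set_option linter.unusedSectionVars false
set_option linter.unusedVariables false
set_option linter.deprecated false
set_option linter.unusedTactic false
set_option maxHeartbeats 1000000

open Finset

/-- The fluid drift of QB-CSMA on a complete interference graph:
`g_v(q) = λ_v - q_v^a / ∑_w q_w^a`. -/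
noncomputable def gdrift {V : Type*} [Fintype V] (a : ℝ) (lam : V → ℝ) (q : V → ℝ) :
    V → ℝ :=
  fun v => lam v - q v ^ a / ∑ w, q w ^ a

/-- A solution of the complete-graph initial value problem with initial condition `q⁰`:
a continuous `f : [0,∞) → [0,∞)^V` with `f(0) = q⁰`, whose sum of coordinates is
`max(s(q⁰) + (s(λ)-1) t, 0)`, and which satisfies `f'(t) = g(f(t))` at every `t > 0`
with `f(t) ≠ 0`. -/
def IsCGSolution {V : Type*} [Fintype V] (a : ℝ) (lam : V → ℝ) (q0 : V → ℝ)
    (f : ℝ → V → ℝ) : Prop :=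
  ContinuousOn f (Set.Ici 0) ∧ f 0 = q0 ∧
    (∀ t, 0 ≤ t → ∀ v, 0 ≤ f t v) ∧
    (∀ t, 0 ≤ t → ∑ v, f t v = max ((∑ v, q0 v) + ((∑ v, lam v) - 1) * t) 0) ∧
    (∀ t, 0 < t → f t ≠ 0 → HasDerivAt f (gdrift a lam (f t)) t)

/-- `τ⁰(f) = inf {t > 0 : min_v f_v(t) ≤ 0}`, with the convention `inf ∅ = +∞`
(realized by taking the infimum in the extended reals). -/
noncomputable def tau0 {V : Type*} (f : ℝ → V → ℝ) : EReal :=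
  sInf ((fun t : ℝ => (t : EReal)) '' {t : ℝ | 0 < t ∧ ∃ v, f t v ≤ 0})

namespace CGExist
open Real Set MeasureTheory intervalIntegral Function

variable {V : Type*} [Fintype V]

noncomputable def mf (lam q0 : V → ℝ) (t : ℝ) : ℝ := (∑ v, q0 v) + ((∑ v, lam v) - 1) * t
noncomputable def phif (lam q0 : V → ℝ) (t : ℝ) : ℝ := (1 - Real.exp (-t)) * mf lam q0 t
noncomputable def Phib (lam q0 : V → ℝ) : ℝ := (∑ v, q0 v) + 2 * |(∑ v, lam v) - 1|
noncomputable def kap (a : ℝ) (lam q0 : V → ℝ) (v : V) : ℝ :=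
  min ((lam v / 2) ^ (1/a) / (Fintype.card V : ℝ)) (lam v / (2 * (1 + Phib lam q0)))
def scf (T s : ℝ) : ℝ := max 0 (min s T)
noncomputable def lbf (a : ℝ) (lam q0 : V → ℝ) (T : ℝ) (v : V) (s : ℝ) : ℝ :=
  max (kap a lam q0 v * phif lam q0 (scf T s)) (q0 v - scf T s)
noncomputable def clf (a : ℝ) (lam q0 : V → ℝ) (T : ℝ) (v : V) (s x : ℝ) : ℝ :=
  max (lbf a lam q0 T v s) x
noncomputable def hG (a : ℝ) (lam q0 : V → ℝ) (T : ℝ) (s : ℝ) (q : V → ℝ) (v : V) : ℝ :=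
  lam v - (clf a lam q0 T v s (q v)) ^ a / ∑ w, (clf a lam q0 T w s (q w)) ^ a

lemma rpow_const_cont {a : ℝ} (h : 0 ≤ a) : Continuous fun t : ℝ => t ^ a :=
  continuous_iff_continuousAt.mpr fun x => Real.continuousAt_rpow_const x a (Or.inr h)

lemma phif_cont (lam q0 : V → ℝ) : Continuous (phif lam q0) := by
  have hmf : Continuous (mf lam q0) := continuous_const.add (continuous_const.mul continuous_id)
  exact (continuous_const.sub (Real.continuous_exp.comp continuous_neg)).mul hmf

lemma rpow_lip {a : ℝ} (ha : 0 < a) {l M x y : ℝ} (hl : 0 < l) (hx : x ∈ Icc l M)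
    (hy : y ∈ Icc l M) :
    |x ^ a - y ^ a| ≤ a * max (l ^ (a-1)) (M ^ (a-1)) * |x - y| := by
  have hconv : Convex ℝ (Icc l M) := convex_Icc l M
  have hderiv : ∀ z ∈ Icc l M, HasDerivWithinAt (fun x : ℝ => x ^ a) (a * z ^ (a-1)) (Icc l M) z :=
    fun z hz => by
      simpa using (Real.hasDerivAt_rpow_const
        (Or.inl (lt_of_lt_of_le hl hz.1).ne')).hasDerivWithinAt
  have hbound : ∀ z ∈ Icc l M, ‖a * z ^ (a-1)‖ ≤ a * max (l ^ (a-1)) (M ^ (a-1)) := by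
    intro z hz
    have hz0 : 0 < z := lt_of_lt_of_le hl hz.1
    rw [Real.norm_eq_abs, abs_mul, abs_of_pos ha, abs_of_pos (Real.rpow_pos_of_pos hz0 _)]
    refine mul_le_mul_of_nonneg_left ?_ ha.le
    rcases le_or_gt 1 a with h1 | h1
    · exact le_max_of_le_right (Real.rpow_le_rpow hz0.le hz.2 (by linarith))
    · exact le_max_of_le_left (Real.rpow_le_rpow_of_nonpos hl hz.1 (by linarith))
  have h := hconv.norm_image_sub_le_of_norm_hasDerivWithin_le hderiv hbound hy hx
  simpa [Real.norm_eq_abs] using h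


section withNE
variable [Nonempty V]
-- chunk1 lemmas
section base
variable [Nonempty V] {a : ℝ} {lam q0 : V → ℝ} {T : ℝ}

lemma scf_mem (T : ℝ) (hT : 0 ≤ T) (s : ℝ) : scf T s ∈ Icc (0:ℝ) T := by
  constructor
  · exact le_max_left _ _
  · simp only [scf, max_le_iff]
    constructor
    · exact hT
    · exact min_le_right _ _

lemma scf_eq (hs : s' ∈ Icc (0:ℝ) T) : scf T s' = s' := by
  obtain ⟨h1, h2⟩ := hs
  simp [scf, min_eq_left h2, max_eq_right h1]

lemma mf_lower (hT : 0 < T) {s : ℝ} (hs : s ∈ Icc (0:ℝ) T) :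
    min (mf lam q0 0) (mf lam q0 T) ≤ mf lam q0 s := by
  obtain ⟨h0, h1⟩ := hs
  rcases le_or_gt 0 ((∑ v, lam v) - 1) with h | h
  · refine le_trans (min_le_left _ _) ?_
    simp only [mf]
    nlinarith
  · refine le_trans (min_le_right _ _) ?_
    simp only [mf]
    nlinarith

lemma phif_nonneg {s : ℝ} (hs : 0 ≤ s) (hm : 0 ≤ mf lam q0 s) : 0 ≤ phif lam q0 s := by
  have : Real.exp (-s) ≤ 1 := Real.exp_le_one_iff.mpr (by linarith)
  have := Real.exp_pos (-s)
  simp only [phif]; nlinarith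

lemma phif_le_mf {s : ℝ} (hs : 0 ≤ s) (hm : 0 ≤ mf lam q0 s) : phif lam q0 s ≤ mf lam q0 s := by
  have : Real.exp (-s) ≤ 1 := Real.exp_le_one_iff.mpr (by linarith)
  have := Real.exp_pos (-s)
  simp only [phif]; nlinarith

lemma phif_pos {s : ℝ} (hs : 0 < s) (hm : 0 < mf lam q0 s) : 0 < phif lam q0 s := by
  have h1 : Real.exp (-s) < 1 := Real.exp_lt_one_iff.mpr (by linarith)
  simp only [phif]; nlinarith

/-- linear lower bound for `phif` on `[0,T]`. -/
lemma phif_lower (hT : 0 < T) {s : ℝ} (hs : s ∈ Icc (0:ℝ) T)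
    (hm : min (mf lam q0 0) (mf lam q0 T) ≤ mf lam q0 s)
    (hml : 0 ≤ min (mf lam q0 0) (mf lam q0 T)) :
    Real.exp (-T) * min (mf lam q0 0) (mf lam q0 T) * s ≤ phif lam q0 s := by
  obtain ⟨h0, h1⟩ := hs
  have he : Real.exp (-s) ≤ 1 := Real.exp_le_one_iff.mpr (by linarith)
  have hse : s * Real.exp (-s) ≤ 1 - Real.exp (-s) := by
    have := Real.add_one_le_exp s
    have hpos := Real.exp_pos (-s)
    have : (s + 1) * Real.exp (-s) ≤ Real.exp s * Real.exp (-s) := by nlinarith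
    rw [← Real.exp_add] at this
    simp at this
    nlinarith
  have heT : Real.exp (-T) ≤ Real.exp (-s) := Real.exp_le_exp.mpr (by linarith)
  have hpos := Real.exp_pos (-s)
  have hchain : Real.exp (-T) * min (mf lam q0 0) (mf lam q0 T) * s
      ≤ (s * Real.exp (-s)) * mf lam q0 s := by
    have h2 : 0 ≤ mf lam q0 s := le_trans hml hm
    nlinarith [mul_le_mul_of_nonneg_left heT (mul_nonneg hml h0),
      mul_le_mul_of_nonneg_left hm (mul_nonneg h0 hpos.le)]
  refine le_trans hchain ?_
  simp only [phif]
  have h2 : 0 ≤ mf lam q0 s := le_trans hml hm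
  nlinarith

lemma phif_hasDeriv (lam q0 : V → ℝ) (s : ℝ) :
    HasDerivAt (phif lam q0)
      (Real.exp (-s) * mf lam q0 s + (1 - Real.exp (-s)) * ((∑ v, lam v) - 1)) s := by
  have h1 : HasDerivAt (fun t : ℝ => 1 - Real.exp (-t)) (Real.exp (-s)) s := by
    have := ((Real.hasDerivAt_exp (-s)).comp s ((hasDerivAt_id s).neg))
    simpa using (hasDerivAt_const s (1:ℝ)).fun_sub this
  have h2 : HasDerivAt (mf lam q0) ((∑ v, lam v) - 1) s := by
    have : HasDerivAt (fun t : ℝ => (∑ v, q0 v) + ((∑ v, lam v) - 1) * t)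
        ((∑ v, lam v) - 1) s := by
      simpa using (hasDerivAt_const s (∑ v, q0 v)).fun_add
        ((hasDerivAt_id s).const_mul ((∑ v, lam v) - 1))
    exact this
  exact h1.mul h2

lemma phif_deriv_le {s : ℝ} (hs : 0 ≤ s) (hq0 : ∀ v, 0 ≤ q0 v) :
    Real.exp (-s) * mf lam q0 s + (1 - Real.exp (-s)) * ((∑ v, lam v) - 1) ≤ Phib lam q0 := by
  have he1 : Real.exp (-s) ≤ 1 := Real.exp_le_one_iff.mpr (by linarith)
  have hpos := Real.exp_pos (-s)
  have hse : s * Real.exp (-s) ≤ 1 := by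
    have := Real.add_one_le_exp s
    have : (s + 1) * Real.exp (-s) ≤ Real.exp s * Real.exp (-s) := by nlinarith
    rw [← Real.exp_add] at this
    simp at this
    nlinarith
  have habs : ((∑ v, lam v) - 1) ≤ |(∑ v, lam v) - 1| := le_abs_self _
  have habs' : -((∑ v, lam v) - 1) ≤ |(∑ v, lam v) - 1| := neg_le_abs _
  have hm : mf lam q0 s ≤ (∑ v, q0 v) + |(∑ v, lam v) - 1| * s := by
    simp only [mf]
    nlinarith
  have hs0 : 0 ≤ ∑ v, q0 v := Finset.sum_nonneg fun v _ => hq0 v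
  have h1 : Real.exp (-s) * mf lam q0 s ≤ (∑ v, q0 v) + |(∑ v, lam v) - 1| := by
    have : Real.exp (-s) * mf lam q0 s ≤ Real.exp (-s) * ((∑ v, q0 v) + |(∑ v, lam v) - 1| * s) :=
      by nlinarith
    refine le_trans this ?_
    have := abs_nonneg ((∑ v, lam v) - 1)
    nlinarith
  have h2 : (1 - Real.exp (-s)) * ((∑ v, lam v) - 1) ≤ |(∑ v, lam v) - 1| := by nlinarith
  simp only [Phib]; linarith

lemma Phib_nonneg (hq0 : ∀ v, 0 ≤ q0 v) : 0 ≤ Phib lam q0 := by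
  have hs0 : 0 ≤ ∑ v, q0 v := Finset.sum_nonneg fun v _ => hq0 v
  have := abs_nonneg ((∑ v, lam v) - 1)
  simp only [Phib]; linarith

lemma card_pos' : (0:ℝ) < (Fintype.card V : ℝ) := by
  have := Fintype.card_pos (α := V)
  exact_mod_cast this

lemma kap_pos (ha : 0 < a) (hlam : ∀ v, 0 < lam v) (hq0 : ∀ v, 0 ≤ q0 v) (v : V) :
    0 < kap a lam q0 v := by
  have h1 : (0:ℝ) < (lam v / 2) ^ (1/a) := Real.rpow_pos_of_pos (by linarith [hlam v]) _
  have h2 := Phib_nonneg (lam := lam) hq0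
  refine lt_min (div_pos h1 card_pos') (div_pos (hlam v) (by linarith))

lemma kap_card_rpow_le (ha : 0 < a) (hlam : ∀ v, 0 < lam v) (hq0 : ∀ v, 0 ≤ q0 v) (v : V) :
    (kap a lam q0 v * (Fintype.card V : ℝ)) ^ a ≤ lam v / 2 := by
  have h1 : kap a lam q0 v * (Fintype.card V : ℝ) ≤ (lam v / 2) ^ (1/a) := by
    have := min_le_left ((lam v / 2) ^ (1/a) / (Fintype.card V : ℝ))
      (lam v / (2 * (1 + Phib lam q0)))
    calc kap a lam q0 v * (Fintype.card V : ℝ)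
        ≤ ((lam v / 2) ^ (1/a) / (Fintype.card V : ℝ)) * (Fintype.card V : ℝ) := by
          exact mul_le_mul_of_nonneg_right this card_pos'.le
      _ = (lam v / 2) ^ (1/a) := by field_simp
  have h0 : 0 ≤ kap a lam q0 v * (Fintype.card V : ℝ) :=
    mul_nonneg (kap_pos ha hlam hq0 v).le card_pos'.le
  calc (kap a lam q0 v * (Fintype.card V : ℝ)) ^ a ≤ ((lam v / 2) ^ (1/a)) ^ a :=
        Real.rpow_le_rpow h0 h1 ha.le
    _ = lam v / 2 := by
        rw [← Real.rpow_mul (by linarith [hlam v])]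
        rw [one_div, inv_mul_cancel₀ ha.ne']
        simp

lemma kap_Phib_lt (ha : 0 < a) (hlam : ∀ v, 0 < lam v) (hq0 : ∀ v, 0 ≤ q0 v) (v : V) :
    kap a lam q0 v * Phib lam q0 < lam v / 2 := by
  have h2 := Phib_nonneg (lam := lam) hq0
  have h1 : kap a lam q0 v ≤ lam v / (2 * (1 + Phib lam q0)) := min_le_right _ _
  have hlv := hlam v
  have : kap a lam q0 v * Phib lam q0 ≤ (lam v / (2 * (1 + Phib lam q0))) * Phib lam q0 :=
    mul_le_mul_of_nonneg_right h1 h2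
  refine lt_of_le_of_lt this ?_
  rw [div_mul_eq_mul_div, div_lt_iff₀ (by linarith)]
  nlinarith

lemma kap_le_lam (ha : 0 < a) (hlam : ∀ v, 0 < lam v) (hq0 : ∀ v, 0 ≤ q0 v) (v : V) :
    kap a lam q0 v ≤ lam v := by
  have h2 := Phib_nonneg (lam := lam) hq0
  have h1 : kap a lam q0 v ≤ lam v / (2 * (1 + Phib lam q0)) := min_le_right _ _
  refine le_trans h1 ?_
  rw [div_le_iff₀ (by linarith)]
  nlinarith [hlam v]


end base

noncomputable def mlow (lam q0 : V → ℝ) (T : ℝ) : ℝ := min (mf lam q0 0) (mf lam q0 T)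
noncomputable def Mbar (lam q0 : V → ℝ) (T : ℝ) : ℝ :=
  (1 + (∑ v, q0 v) + (∑ v, lam v))^2 * (1 + T)
noncomputable def kmin (a : ℝ) (lam q0 : V → ℝ) : ℝ :=
  Finset.univ.inf' Finset.univ_nonempty (kap a lam q0)
noncomputable def chat (a : ℝ) (lam q0 : V → ℝ) (T : ℝ) : ℝ :=
  kmin a lam q0 * Real.exp (-T) * mlow lam q0 T
noncomputable def clow (a : ℝ) (lam q0 : V → ℝ) (T : ℝ) : ℝ :=
  chat a lam q0 T * ((∑ v, q0 v) / (Fintype.card V : ℝ)) / (1 + chat a lam q0 T)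
noncomputable def Lf (a : ℝ) (lam q0 : V → ℝ) (T : ℝ) (s : ℝ) : ℝ :=
  (((Fintype.card V : ℝ) + 1) / clow a lam q0 T ^ a) *
    (a * (chat a lam q0 T ^ (a-1) * s ^ (a-1) + Mbar lam q0 T ^ (a-1)))
noncomputable def Lam (a : ℝ) (lam q0 : V → ℝ) (T : ℝ) (t : ℝ) : ℝ :=
  (((Fintype.card V : ℝ) + 1) / clow a lam q0 T ^ a) *
    (chat a lam q0 T ^ (a-1) * t ^ a + a * Mbar lam q0 T ^ (a-1) * t)

variable {a : ℝ} {lam q0 : V → ℝ} {T : ℝ}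

lemma poly_bound1 {A B T : ℝ} (hA : 0 ≤ A) (hB : 0 < B) (hT : 0 < T) :
    B * (A + (B+1)*T) ≤ (1+A+B)^2*(1+T) := by
  nlinarith [sq_nonneg (1+A+B), mul_pos hB hT, mul_nonneg hA hT.le, mul_nonneg hA hB.le,
    sq_nonneg B, mul_nonneg (mul_nonneg hB.le hB.le) hT.le, mul_nonneg (mul_nonneg hA hB.le) hT.le]

lemma poly_bound2 {A B T : ℝ} (hA : 0 ≤ A) (hB : 0 < B) (hT : 0 < T) :
    A ≤ (1+A+B)^2*(1+T) := by
  nlinarith [sq_nonneg (1+A+B), mul_nonneg hA hT.le, mul_nonneg hA hB.le, sq_nonneg B,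
    mul_nonneg (mul_nonneg hA hA) hT.le, sq_nonneg (A+B), mul_nonneg hA hA]

lemma poly_bound3 {A B T : ℝ} (hA : 0 ≤ A) (hB : 0 < B) (hT : 0 < T) :
    A + B * T ≤ (1+A+B)^2*(1+T) := by
  nlinarith [sq_nonneg (1+A+B), mul_pos hB hT, mul_nonneg hA hT.le, mul_nonneg hA hB.le,
    sq_nonneg B, mul_nonneg (mul_nonneg hB.le hB.le) hT.le, mul_nonneg hA hA]

section ctx
variable (ha : 0 < a) (hlam : ∀ v, 0 < lam v) (hq0 : ∀ v, 0 ≤ q0 v)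
  (hs0 : 0 < ∑ v, q0 v) (hT : 0 < T) (hmT : 0 < mf lam q0 T)

include ha hlam hq0 hs0 hT hmT

lemma mlow_pos : 0 < mlow lam q0 T := by
  have : mf lam q0 0 = ∑ v, q0 v := by simp [mf]
  simp only [mlow]
  rw [this]
  exact lt_min hs0 hmT

lemma kmin_pos : 0 < kmin a lam q0 := by
  simp only [kmin]
  rw [Finset.lt_inf'_iff]
  exact fun v _ => kap_pos ha hlam hq0 v

lemma chat_pos : 0 < chat a lam q0 T :=
  mul_pos (mul_pos (kmin_pos ha hlam hq0 hs0 hT hmT) (Real.exp_pos _))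
    (mlow_pos ha hlam hq0 hs0 hT hmT)

lemma clow_pos : 0 < clow a lam q0 T := by
  have h1 := chat_pos ha hlam hq0 hs0 hT hmT
  exact div_pos (mul_pos h1 (div_pos hs0 card_pos')) (by linarith)

lemma mf_scf_nonneg (s : ℝ) : 0 ≤ mf lam q0 (scf T s) :=
  le_trans (mlow_pos ha hlam hq0 hs0 hT hmT).le (mf_lower hT (scf_mem T hT.le s))

lemma lbf_nonneg (v : V) (s : ℝ) : 0 ≤ lbf a lam q0 T v s := by
  refine le_trans ?_ (le_max_left _ _)
  exact mul_nonneg (kap_pos ha hlam hq0 v).le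
    (phif_nonneg (scf_mem T hT.le s).1 (mf_scf_nonneg ha hlam hq0 hs0 hT hmT s))

lemma lbf_ge_linear (v : V) {s : ℝ} (hs : s ∈ Icc (0:ℝ) T) :
    chat a lam q0 T * s ≤ lbf a lam q0 T v s := by
  refine le_trans ?_ (le_max_left _ _)
  rw [scf_eq hs]
  have h1 : Real.exp (-T) * mlow lam q0 T * s ≤ phif lam q0 s :=
    phif_lower hT hs (mf_lower hT hs) (mlow_pos ha hlam hq0 hs0 hT hmT).le
  have h2 : kmin a lam q0 ≤ kap a lam q0 v := Finset.inf'_le _ (Finset.mem_univ v)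
  have h3 := kap_pos ha hlam hq0 v
  have h4 : 0 ≤ Real.exp (-T) * mlow lam q0 T * s :=
    mul_nonneg (mul_nonneg (Real.exp_pos _).le (mlow_pos ha hlam hq0 hs0 hT hmT).le) hs.1
  calc chat a lam q0 T * s = kmin a lam q0 * (Real.exp (-T) * mlow lam q0 T * s) := by
        simp only [chat]; ring
    _ ≤ kap a lam q0 v * (Real.exp (-T) * mlow lam q0 T * s) :=
        mul_le_mul_of_nonneg_right h2 h4
    _ ≤ kap a lam q0 v * phif lam q0 s := mul_le_mul_of_nonneg_left h1 h3.le

lemma exists_wtilde : ∃ w : V, (∑ v, q0 v) / (Fintype.card V : ℝ) ≤ q0 w := by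
  by_contra h
  push_neg at h
  have hcard := card_pos' (V := V)
  have : ∑ v : V, q0 v < ∑ v : V, (∑ v, q0 v) / (Fintype.card V : ℝ) :=
    Finset.sum_lt_sum_of_nonempty Finset.univ_nonempty (fun v _ => h v)
  rw [Finset.sum_const, Finset.card_univ, nsmul_eq_mul] at this
  rw [mul_div_cancel₀ _ hcard.ne'] at this
  exact lt_irrefl _ this

lemma lbf_wtilde {w : V} (hw : (∑ v, q0 v) / (Fintype.card V : ℝ) ≤ q0 w) (s : ℝ) :
    clow a lam q0 T ≤ lbf a lam q0 T w s := by
  set α := chat a lam q0 T with hα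
  have hαpos := chat_pos ha hlam hq0 hs0 hT hmT
  set Q := (∑ v, q0 v) / (Fintype.card V : ℝ) with hQ
  have hQpos : 0 < Q := div_pos hs0 card_pos'
  set u := scf T s with hu
  have hu0 : u ∈ Icc (0:ℝ) T := scf_mem T hT.le s
  have hlin : α * u ≤ lbf a lam q0 T w s := by
    have := lbf_ge_linear ha hlam hq0 hs0 hT hmT w hu0
    have heq : lbf a lam q0 T w u = lbf a lam q0 T w s := by
      simp only [lbf]
      rw [scf_eq hu0]
    rw [← heq]; exact this
  have hq0w : q0 w - u ≤ lbf a lam q0 T w s := by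
    refine le_trans ?_ (le_max_right _ _)
    exact le_refl _
  rcases le_or_gt (Q / (1 + α)) u with h | h
  · refine le_trans ?_ hlin
    simp only [clow, ← hα, ← hQ]
    calc α * Q / (1 + α) = α * (Q / (1 + α)) := by ring
      _ ≤ α * u := mul_le_mul_of_nonneg_left h hαpos.le
  · refine le_trans ?_ hq0w
    simp only [clow, ← hα, ← hQ]
    have : Q - Q / (1 + α) = α * Q / (1 + α) := by
      have h1α : (1 + α) ≠ 0 := by linarith
      field_simp
      ring
    have h2 : α * Q / (1 + α) ≤ Q - u := by
      rw [← this]; linarith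
    linarith [hw]

lemma lbf_le_Mbar (v : V) (s : ℝ) : lbf a lam q0 T v s ≤ Mbar lam q0 T := by
  have hS : 0 < ∑ v, lam v := Finset.sum_pos (fun v _ => hlam v) Finset.univ_nonempty
  have hlv : lam v ≤ ∑ w, lam w := Finset.single_le_sum (fun w _ => (hlam w).le) (Finset.mem_univ v)
  have hq0v : q0 v ≤ ∑ w, q0 w := Finset.single_le_sum (fun w _ => hq0 w) (Finset.mem_univ v)
  have hu := scf_mem T hT.le s
  have hm0 := mf_scf_nonneg ha hlam hq0 hs0 hT hmT s
  have hmub : mf lam q0 (scf T s) ≤ (∑ w, q0 w) + ((∑ w, lam w) + 1) * T := by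
    simp only [mf]
    have h1 : ((∑ v, lam v) - 1) * scf T s ≤ |(∑ v, lam v) - 1| * T := by
      calc ((∑ v, lam v) - 1) * scf T s ≤ |(∑ v, lam v) - 1| * scf T s :=
            mul_le_mul_of_nonneg_right (le_abs_self _) hu.1
        _ ≤ |(∑ v, lam v) - 1| * T := mul_le_mul_of_nonneg_left hu.2 (abs_nonneg _)
    have h2 : |(∑ v, lam v) - 1| ≤ (∑ v, lam v) + 1 := by
      rw [abs_le]; constructor <;> nlinarith
    nlinarith [hT.le]
  simp only [lbf, Mbar]
  rw [max_le_iff]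
  constructor
  · have h1 : kap a lam q0 v * phif lam q0 (scf T s) ≤ lam v * mf lam q0 (scf T s) := by
      have := phif_le_mf (lam := lam) (q0 := q0) hu.1 hm0
      have hκ := kap_le_lam ha hlam hq0 v
      have hκpos := kap_pos ha hlam hq0 v
      have := phif_nonneg (lam := lam) (q0 := q0) hu.1 hm0
      nlinarith [hlam v]
    refine le_trans h1 ?_
    calc lam v * mf lam q0 (scf T s) ≤ (∑ w, lam w) * ((∑ w, q0 w) + ((∑ w, lam w) + 1) * T) :=
          mul_le_mul hlv hmub hm0 hS.le
      _ ≤ (1 + (∑ v, q0 v) + (∑ v, lam v))^2 * (1 + T) := poly_bound1 hs0.le hS hT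
  · have : q0 v - scf T s ≤ ∑ w, q0 w := by linarith [hu.1]
    refine le_trans this ?_
    exact poly_bound2 hs0.le hS hT

lemma state_le_Mbar (v : V) {s x : ℝ} (hs : s ∈ Icc (0:ℝ) T) (hx : x ≤ q0 v + lam v * s) :
    x ≤ Mbar lam q0 T := by
  have hS : 0 < ∑ v, lam v := Finset.sum_pos (fun v _ => hlam v) Finset.univ_nonempty
  have hlv : lam v ≤ ∑ w, lam w := Finset.single_le_sum (fun w _ => (hlam w).le) (Finset.mem_univ v)
  have hq0v : q0 v ≤ ∑ w, q0 w := Finset.single_le_sum (fun w _ => hq0 w) (Finset.mem_univ v)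
  refine le_trans hx ?_
  simp only [Mbar]
  have h1 : lam v * s ≤ (∑ w, lam w) * T :=
    mul_le_mul hlv hs.2 hs.1 hS.le
  calc q0 v + lam v * s ≤ (∑ w, q0 w) + (∑ w, lam w) * T := by linarith
    _ ≤ (1 + (∑ v, q0 v) + (∑ v, lam v))^2 * (1 + T) := poly_bound3 hs0.le hS hT

end ctx

section ctx
variable (ha : 0 < a) (hlam : ∀ v, 0 < lam v) (hq0 : ∀ v, 0 ≤ q0 v)
  (hs0 : 0 < ∑ v, q0 v) (hT : 0 < T) (hmT : 0 < mf lam q0 T)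

include ha hlam hq0 hs0 hT hmT

lemma Mbar_nonneg : 0 ≤ Mbar lam q0 T := by
  simp only [Mbar]
  nlinarith [sq_nonneg (1 + (∑ v, q0 v) + (∑ v, lam v)), hT]


lemma clf_nonneg (v : V) (s x : ℝ) : 0 ≤ clf a lam q0 T v s x :=
  le_trans (lbf_nonneg ha hlam hq0 hs0 hT hmT v s) (le_max_left _ _)

lemma denom_ge (s : ℝ) (q : V → ℝ) :
    clow a lam q0 T ^ a ≤ ∑ w, clf a lam q0 T w s (q w) ^ a := by
  obtain ⟨w, hw⟩ := exists_wtilde ha hlam hq0 hs0 hT hmT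
  have h1 : clow a lam q0 T ≤ clf a lam q0 T w s (q w) :=
    le_trans (lbf_wtilde ha hlam hq0 hs0 hT hmT hw s) (le_max_left _ _)
  calc clow a lam q0 T ^ a ≤ clf a lam q0 T w s (q w) ^ a :=
        Real.rpow_le_rpow (clow_pos ha hlam hq0 hs0 hT hmT).le h1 ha.le
    _ ≤ ∑ w, clf a lam q0 T w s (q w) ^ a :=
        Finset.single_le_sum
          (fun u _ => Real.rpow_nonneg (clf_nonneg ha hlam hq0 hs0 hT hmT u s (q u)) a)
          (Finset.mem_univ w)

lemma denom_pos (s : ℝ) (q : V → ℝ) : 0 < ∑ w, clf a lam q0 T w s (q w) ^ a :=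
  lt_of_lt_of_le (Real.rpow_pos_of_pos (clow_pos ha hlam hq0 hs0 hT hmT) a)
    (denom_ge ha hlam hq0 hs0 hT hmT s q)

lemma hG_le (s : ℝ) (q : V → ℝ) (v : V) : hG a lam q0 T s q v ≤ lam v := by
  have h1 : 0 ≤ (clf a lam q0 T v s (q v)) ^ a / ∑ w, clf a lam q0 T w s (q w) ^ a :=
    div_nonneg (Real.rpow_nonneg (clf_nonneg ha hlam hq0 hs0 hT hmT v s (q v)) a)
      (denom_pos ha hlam hq0 hs0 hT hmT s q).le
  simp only [hG]; linarith

lemma hG_ge (s : ℝ) (q : V → ℝ) (v : V) : lam v - 1 ≤ hG a lam q0 T s q v := by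
  have h1 : (clf a lam q0 T v s (q v)) ^ a / (∑ w, clf a lam q0 T w s (q w) ^ a) ≤ 1 := by
    rw [div_le_one (denom_pos ha hlam hq0 hs0 hT hmT s q)]
    exact Finset.single_le_sum
      (fun u _ => Real.rpow_nonneg (clf_nonneg ha hlam hq0 hs0 hT hmT u s (q u)) a)
      (Finset.mem_univ v)
  simp only [hG]; linarith

lemma hG_sum (s : ℝ) (q : V → ℝ) : ∑ v, hG a lam q0 T s q v = (∑ v, lam v) - 1 := by
  have hE := denom_pos ha hlam hq0 hs0 hT hmT s q
  simp only [hG]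
  rw [Finset.sum_sub_distrib, ← Finset.sum_div, div_self hE.ne']

lemma lbf_continuous (v : V) : Continuous (lbf a lam q0 T v) := by
  have hscf : Continuous (scf T) := continuous_const.max (continuous_id.min continuous_const)
  have hmf : Continuous (mf lam q0) := continuous_const.add (continuous_const.mul continuous_id)
  have hphif : Continuous (phif lam q0) :=
    (continuous_const.sub (Real.continuous_exp.comp continuous_neg)).mul hmf
  exact ((continuous_const.mul (hphif.comp hscf)).max (continuous_const.sub hscf))

lemma hG_cont_comp {f : ℝ → V → ℝ} (hf : Continuous f) (v : V) :
    Continuous (fun s => hG a lam q0 T s (f s) v) := by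
  have hcl : ∀ w : V, Continuous (fun s => clf a lam q0 T w s (f s w)) := fun w =>
    (lbf_continuous ha hlam hq0 hs0 hT hmT w).max ((continuous_apply w).comp hf)
  have hcla : ∀ w : V, Continuous (fun s => clf a lam q0 T w s (f s w) ^ a) := fun w =>
    (hcl w).rpow_const (fun x => Or.inr ha.le)
  refine continuous_const.sub ((hcla v).div (continuous_finset_sum _ fun w _ => hcla w) ?_)
  exact fun s => (denom_pos ha hlam hq0 hs0 hT hmT s (f s)).ne'

lemma clf_lip (v : V) (s x y : ℝ) :
    |clf a lam q0 T v s x - clf a lam q0 T v s y| ≤ |x - y| := by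
  simp only [clf]
  have h := abs_max_sub_max_le_abs x y (lbf a lam q0 T v s)
  simpa [max_comm] using h

lemma hG_lip {s : ℝ} (hs : s ∈ Ioc (0:ℝ) T) {p q : V → ℝ} (hp : ∀ w, p w ≤ Mbar lam q0 T)
    (hq : ∀ w, q w ≤ Mbar lam q0 T) (v : V) :
    |hG a lam q0 T s p v - hG a lam q0 T s q v| ≤ Lf a lam q0 T s * dist p q := by
  set Kc : ℝ := a * (chat a lam q0 T ^ (a-1) * s ^ (a-1) + Mbar lam q0 T ^ (a-1)) with hKc
  have hchat := chat_pos ha hlam hq0 hs0 hT hmT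
  have hsIcc : s ∈ Icc (0:ℝ) T := ⟨hs.1.le, hs.2⟩
  have hchats : 0 < chat a lam q0 T * s := mul_pos hchat hs.1
  have hmulr : chat a lam q0 T ^ (a-1) * s ^ (a-1) = (chat a lam q0 T * s) ^ (a-1) :=
    (Real.mul_rpow hchat.le hs.1.le).symm
  -- pointwise bound on each term
  have key : ∀ w : V, |clf a lam q0 T w s (p w) ^ a - clf a lam q0 T w s (q w) ^ a|
      ≤ Kc * dist p q := by
    intro w
    have hl0 : 0 < lbf a lam q0 T w s :=
      lt_of_lt_of_le hchats (lbf_ge_linear ha hlam hq0 hs0 hT hmT w hsIcc)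
    have hclp : clf a lam q0 T w s (p w) ∈ Icc (lbf a lam q0 T w s) (Mbar lam q0 T) :=
      ⟨le_max_left _ _, max_le (lbf_le_Mbar ha hlam hq0 hs0 hT hmT w s) (hp w)⟩
    have hclq : clf a lam q0 T w s (q w) ∈ Icc (lbf a lam q0 T w s) (Mbar lam q0 T) :=
      ⟨le_max_left _ _, max_le (lbf_le_Mbar ha hlam hq0 hs0 hT hmT w s) (hq w)⟩
    have h1 := rpow_lip ha hl0 hclp hclq
    have hmaxle : max (lbf a lam q0 T w s ^ (a-1)) (Mbar lam q0 T ^ (a-1))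
        ≤ chat a lam q0 T ^ (a-1) * s ^ (a-1) + Mbar lam q0 T ^ (a-1) := by
      rw [hmulr]
      refine max_le ?_ (le_add_of_nonneg_left (Real.rpow_nonneg hchats.le _))
      rcases le_or_gt 1 a with hc | hc
      · refine le_trans (Real.rpow_le_rpow hl0.le
          (lbf_le_Mbar ha hlam hq0 hs0 hT hmT w s) (by linarith)) ?_
        exact le_add_of_nonneg_left (Real.rpow_nonneg hchats.le _)
      · refine le_trans (Real.rpow_le_rpow_of_nonpos hchats
          (lbf_ge_linear ha hlam hq0 hs0 hT hmT w hsIcc) (by linarith)) ?_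
        exact le_add_of_nonneg_right (Real.rpow_nonneg
          (le_trans hl0.le (lbf_le_Mbar ha hlam hq0 hs0 hT hmT w s)) _)
    have h2 : |clf a lam q0 T w s (p w) - clf a lam q0 T w s (q w)| ≤ dist p q := by
      refine le_trans (clf_lip ha hlam hq0 hs0 hT hmT w s (p w) (q w)) ?_
      rw [← Real.dist_eq]
      exact dist_le_pi_dist p q w
    calc |clf a lam q0 T w s (p w) ^ a - clf a lam q0 T w s (q w) ^ a|
        ≤ a * max (lbf a lam q0 T w s ^ (a-1)) (Mbar lam q0 T ^ (a-1)) *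
            |clf a lam q0 T w s (p w) - clf a lam q0 T w s (q w)| := h1
      _ ≤ Kc * dist p q := by
          rw [hKc]
          have hMbar0 : (0:ℝ) ≤ Mbar lam q0 T := by
            simp only [Mbar]; positivity
          refine mul_le_mul (mul_le_mul_of_nonneg_left hmaxle ha.le) h2 (abs_nonneg _) ?_
          exact mul_nonneg ha.le (add_nonneg (mul_nonneg (Real.rpow_nonneg hchat.le _)
            (Real.rpow_nonneg hs.1.le _)) (Real.rpow_nonneg hMbar0 _))
  -- assemble
  set E : ℝ := ∑ w, clf a lam q0 T w s (p w) ^ a with hE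
  set E' : ℝ := ∑ w, clf a lam q0 T w s (q w) ^ a with hE'
  set ev : ℝ := clf a lam q0 T v s (p v) ^ a with hev
  set ev' : ℝ := clf a lam q0 T v s (q v) ^ a with hev'
  have hEpos : 0 < E := denom_pos ha hlam hq0 hs0 hT hmT s p
  have hE'pos : 0 < E' := denom_pos ha hlam hq0 hs0 hT hmT s q
  have hclowa : 0 < clow a lam q0 T ^ a :=
    Real.rpow_pos_of_pos (clow_pos ha hlam hq0 hs0 hT hmT) a
  have hEge : clow a lam q0 T ^ a ≤ E := denom_ge ha hlam hq0 hs0 hT hmT s p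
  have hgoal : |hG a lam q0 T s p v - hG a lam q0 T s q v| = |ev / E - ev' / E'| := by
    simp only [hG, ← hE, ← hE', ← hev, ← hev']
    rw [show lam v - ev / E - (lam v - ev' / E') = -(ev / E - ev' / E') by ring, abs_neg]
  rw [hgoal]
  have hidentity : ev / E - ev' / E' = (ev - ev') / E + ev' * (E' - E) / (E' * E) := by
    field_simp
    ring
  rw [hidentity]
  have hKc0 : (0:ℝ) ≤ Kc * dist p q := le_trans (abs_nonneg _) (key v)
  have hb1 : |(ev - ev') / E| ≤ Kc * dist p q / clow a lam q0 T ^ a := by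
    rw [abs_div, abs_of_pos hEpos]
    exact div_le_div₀ hKc0 (key v) hclowa hEge
  have hEdiff : |E' - E| ≤ (Fintype.card V : ℝ) * (Kc * dist p q) := by
    have h1 : |E' - E| ≤ ∑ w, |clf a lam q0 T w s (q w) ^ a - clf a lam q0 T w s (p w) ^ a| := by
      rw [hE, hE', ← Finset.sum_sub_distrib]
      exact Finset.abs_sum_le_sum_abs _ _
    refine le_trans h1 ?_
    have h2 : ∀ w ∈ Finset.univ (α := V),
        |clf a lam q0 T w s (q w) ^ a - clf a lam q0 T w s (p w) ^ a| ≤ Kc * dist p q := by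
      intro w _
      rw [abs_sub_comm]
      exact key w
    calc ∑ w, |clf a lam q0 T w s (q w) ^ a - clf a lam q0 T w s (p w) ^ a|
        ≤ ∑ _w : V, Kc * dist p q := Finset.sum_le_sum h2
      _ = (Fintype.card V : ℝ) * (Kc * dist p q) := by
          rw [Finset.sum_const, Finset.card_univ, nsmul_eq_mul]
  have hevE' : ev' ≤ E' :=
    Finset.single_le_sum
      (fun u _ => Real.rpow_nonneg (clf_nonneg ha hlam hq0 hs0 hT hmT u s (q u)) a)
      (Finset.mem_univ v)
  have hev'0 : 0 ≤ ev' := Real.rpow_nonneg (clf_nonneg ha hlam hq0 hs0 hT hmT v s (q v)) a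
  have hb2 : |ev' * (E' - E) / (E' * E)| ≤
      (Fintype.card V : ℝ) * (Kc * dist p q) / clow a lam q0 T ^ a := by
    rw [abs_div, abs_mul, abs_of_pos (mul_pos hE'pos hEpos), abs_of_nonneg hev'0]
    have hnum : ev' * |E' - E| ≤ E' * ((Fintype.card V : ℝ) * (Kc * dist p q)) :=
      mul_le_mul hevE' hEdiff (abs_nonneg _) hE'pos.le
    calc ev' * |E' - E| / (E' * E) ≤ E' * ((Fintype.card V : ℝ) * (Kc * dist p q)) / (E' * E) :=
          (div_le_div_iff_of_pos_right (mul_pos hE'pos hEpos)).mpr hnum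
      _ = (Fintype.card V : ℝ) * (Kc * dist p q) / E := by
          rw [mul_div_mul_left _ _ hE'pos.ne']
      _ ≤ (Fintype.card V : ℝ) * (Kc * dist p q) / clow a lam q0 T ^ a := by
          have hnn : (0:ℝ) ≤ (Fintype.card V : ℝ) * (Kc * dist p q) :=
            mul_nonneg (Nat.cast_nonneg _) hKc0
          exact div_le_div₀ hnn le_rfl hclowa hEge
  calc |(ev - ev') / E + ev' * (E' - E) / (E' * E)|
      ≤ |(ev - ev') / E| + |ev' * (E' - E) / (E' * E)| := abs_add_le _ _
    _ ≤ Kc * dist p q / clow a lam q0 T ^ a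
        + (Fintype.card V : ℝ) * (Kc * dist p q) / clow a lam q0 T ^ a := add_le_add hb1 hb2
    _ = Lf a lam q0 T s * dist p q := by
        simp only [Lf, hKc]
        field_simp
        ring

end ctx

structure Ctx (a : ℝ) (lam q0 : V → ℝ) (T : ℝ) : Prop where
  ha : 0 < a
  hlam : ∀ v, 0 < lam v
  hq0 : ∀ v, 0 ≤ q0 v
  hs0 : 0 < ∑ v, q0 v
  hT : 0 < T
  hmT : 0 < mf lam q0 T

-- Ctx-based wrappers
lemma chat_pos' (hc : Ctx a lam q0 T) : 0 < chat a lam q0 T :=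
  chat_pos hc.ha hc.hlam hc.hq0 hc.hs0 hc.hT hc.hmT
lemma clow_pos' (hc : Ctx a lam q0 T) : 0 < clow a lam q0 T :=
  clow_pos hc.ha hc.hlam hc.hq0 hc.hs0 hc.hT hc.hmT
lemma denom_pos' (hc : Ctx a lam q0 T) (s : ℝ) (q : V → ℝ) :
    0 < ∑ w, clf a lam q0 T w s (q w) ^ a :=
  denom_pos hc.ha hc.hlam hc.hq0 hc.hs0 hc.hT hc.hmT s q
lemma hG_le' (hc : Ctx a lam q0 T) (s : ℝ) (q : V → ℝ) (v : V) : hG a lam q0 T s q v ≤ lam v :=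
  hG_le hc.ha hc.hlam hc.hq0 hc.hs0 hc.hT hc.hmT s q v
lemma hG_ge' (hc : Ctx a lam q0 T) (s : ℝ) (q : V → ℝ) (v : V) :
    lam v - 1 ≤ hG a lam q0 T s q v :=
  hG_ge hc.ha hc.hlam hc.hq0 hc.hs0 hc.hT hc.hmT s q v
lemma hG_sum' (hc : Ctx a lam q0 T) (s : ℝ) (q : V → ℝ) :
    ∑ v, hG a lam q0 T s q v = (∑ v, lam v) - 1 :=
  hG_sum hc.ha hc.hlam hc.hq0 hc.hs0 hc.hT hc.hmT s q
lemma hG_cont_comp' (hc : Ctx a lam q0 T) {f : ℝ → V → ℝ} (hf : Continuous f) (v : V) :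
    Continuous (fun s => hG a lam q0 T s (f s) v) :=
  hG_cont_comp hc.ha hc.hlam hc.hq0 hc.hs0 hc.hT hc.hmT hf v
lemma hG_lip' (hc : Ctx a lam q0 T) {s : ℝ} (hs : s ∈ Ioc (0:ℝ) T) {p q : V → ℝ}
    (hp : ∀ w, p w ≤ Mbar lam q0 T) (hq : ∀ w, q w ≤ Mbar lam q0 T) (v : V) :
    |hG a lam q0 T s p v - hG a lam q0 T s q v| ≤ Lf a lam q0 T s * dist p q :=
  hG_lip hc.ha hc.hlam hc.hq0 hc.hs0 hc.hT hc.hmT hs hp hq v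
lemma state_le_Mbar' (hc : Ctx a lam q0 T) (v : V) {s x : ℝ} (hs : s ∈ Icc (0:ℝ) T)
    (hx : x ≤ q0 v + lam v * s) : x ≤ Mbar lam q0 T :=
  state_le_Mbar hc.ha hc.hlam hc.hq0 hc.hs0 hc.hT hc.hmT v hs hx
lemma Mbar_nonneg' (hc : Ctx a lam q0 T) : 0 ≤ Mbar lam q0 T :=
  Mbar_nonneg hc.ha hc.hlam hc.hq0 hc.hs0 hc.hT hc.hmT
lemma mf_lower'' (hT : 0 < T) {s : ℝ} (hs : s ∈ Icc (0:ℝ) T) :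
    mlow lam q0 T ≤ mf lam q0 s := by
  simpa [mlow] using mf_lower (lam := lam) (q0 := q0) hT hs
lemma mlow_pos' (hc : Ctx a lam q0 T) : 0 < mlow lam q0 T :=
  mlow_pos hc.ha hc.hlam hc.hq0 hc.hs0 hc.hT hc.hmT
lemma phif_deriv_le' (hc : Ctx a lam q0 T) {s : ℝ} (hs : 0 ≤ s) :
    Real.exp (-s) * mf lam q0 s + (1 - Real.exp (-s)) * ((∑ v, lam v) - 1) ≤ Phib lam q0 :=
  phif_deriv_le hs hc.hq0
lemma kap_pos'' (hc : Ctx a lam q0 T) (v : V) : 0 < kap a lam q0 v :=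
  kap_pos hc.ha hc.hlam hc.hq0 v
lemma kap_card_rpow_le' (hc : Ctx a lam q0 T) (v : V) :
    (kap a lam q0 v * (Fintype.card V : ℝ)) ^ a ≤ lam v / 2 :=
  kap_card_rpow_le hc.ha hc.hlam hc.hq0 v
lemma kap_Phib_lt' (hc : Ctx a lam q0 T) (v : V) :
    kap a lam q0 v * Phib lam q0 < lam v / 2 :=
  kap_Phib_lt hc.ha hc.hlam hc.hq0 v
lemma clf_nonneg' (hc : Ctx a lam q0 T) (v : V) (s x : ℝ) : 0 ≤ clf a lam q0 T v s x :=
  clf_nonneg hc.ha hc.hlam hc.hq0 hc.hs0 hc.hT hc.hmT v s x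

/-- the invariant tube of curves -/
def XT (lam q0 : V → ℝ) (T : ℝ) : Set C(Icc (0:ℝ) T, V → ℝ) :=
  {f | ∀ (t : Icc (0:ℝ) T) (v : V), q0 v + (lam v - 1) * t ≤ f t v ∧ f t v ≤ q0 v + lam v * t}

noncomputable def extc {T : ℝ} (hT : 0 ≤ T) (f : C(Icc (0:ℝ) T, V → ℝ)) : ℝ → V → ℝ :=
  fun s => f (projIcc 0 T hT s)

lemma extc_continuous {T : ℝ} (hT : 0 ≤ T) (f : C(Icc (0:ℝ) T, V → ℝ)) :
    Continuous (extc hT f) := f.continuous.comp continuous_projIcc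

lemma extc_le (hT : 0 ≤ T) {f : C(Icc (0:ℝ) T, V → ℝ)} (hf : f ∈ XT lam q0 T) {s : ℝ}
    (hs : s ∈ Icc (0:ℝ) T) (w : V) : extc hT f s w ≤ q0 w + lam w * s := by
  have h := (hf (projIcc 0 T hT s) w).2
  rw [projIcc_of_mem hT hs] at h
  simpa [extc, projIcc_of_mem hT hs] using h

lemma XT_closed : IsClosed (XT lam q0 T) := by
  have : XT lam q0 T = ⋂ (t : Icc (0:ℝ) T), ⋂ (v : V),
      ({f : C(Icc (0:ℝ) T, V → ℝ) | q0 v + (lam v - 1) * t ≤ f t v} ∩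
       {f : C(Icc (0:ℝ) T, V → ℝ) | f t v ≤ q0 v + lam v * t}) := by
    ext f
    simp only [XT, Set.mem_setOf_eq, Set.mem_iInter, Set.mem_inter_iff]
  rw [this]
  refine isClosed_iInter fun t => isClosed_iInter fun v => IsClosed.inter ?_ ?_
  · exact isClosed_le continuous_const
      ((continuous_apply v).comp (continuous_eval_const t))
  · exact isClosed_le ((continuous_apply v).comp (continuous_eval_const t))
      continuous_const

lemma XT_nonempty (hc : Ctx a lam q0 T) : Nonempty (XT (V := V) lam q0 T) := by
  refine ⟨⟨⟨fun t => fun v => q0 v + (lam v - 1/2) * t, ?_⟩, ?_⟩⟩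
  · exact continuous_pi fun v => continuous_const.add (continuous_const.mul
      (continuous_subtype_val))
  · intro t v
    constructor
    · have := t.2.1
      simp only [ContinuousMap.coe_mk]
      nlinarith
    · have := t.2.1
      simp only [ContinuousMap.coe_mk]
      nlinarith

noncomputable def Fraw (hc : Ctx a lam q0 T) (f : C(Icc (0:ℝ) T, V → ℝ)) :
    C(Icc (0:ℝ) T, V → ℝ) :=
  ⟨fun t => fun v => q0 v + ∫ s in (0:ℝ)..(t:ℝ), hG a lam q0 T s (extc hc.hT.le f s) v, by
    refine continuous_pi fun v => Continuous.add continuous_const ?_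
    have hcont := hG_cont_comp' hc (extc_continuous hc.hT.le f) v
    exact (intervalIntegral.continuous_primitive
      (fun c d => Continuous.intervalIntegrable (μ := volume) hcont c d) 0).comp continuous_subtype_val⟩

lemma Fraw_mem (hc : Ctx a lam q0 T) (f : C(Icc (0:ℝ) T, V → ℝ)) :
    Fraw hc f ∈ XT lam q0 T := by
  intro t v
  have hcont := hG_cont_comp' hc (extc_continuous hc.hT.le f) v
  have hint := Continuous.intervalIntegrable (μ := volume) hcont 0 (t:ℝ)
  constructor
  · have h := intervalIntegral.integral_mono_on t.2.1
      (_root_.intervalIntegrable_const (μ := volume) (c := lam v - 1)) hint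
      (fun s _ => hG_ge' hc s (extc hc.hT.le f s) v)
    simp only [Fraw, ContinuousMap.coe_mk]
    rw [intervalIntegral.integral_const] at h
    simp only [sub_zero, smul_eq_mul] at h
    linarith [h]
  · have h := intervalIntegral.integral_mono_on t.2.1 hint
      (_root_.intervalIntegrable_const (μ := volume) (c := lam v))
      (fun s _ => hG_le' hc s (extc hc.hT.le f s) v)
    simp only [Fraw, ContinuousMap.coe_mk]
    rw [intervalIntegral.integral_const] at h
    simp only [sub_zero, smul_eq_mul] at h
    linarith [h]

noncomputable def FopS (hc : Ctx a lam q0 T) (f : XT (V := V) lam q0 T) : XT (V := V) lam q0 T :=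
  ⟨Fraw hc f.1, Fraw_mem hc f.1⟩

lemma Lam_cont (hc : Ctx a lam q0 T) : Continuous (Lam a lam q0 T) :=
  continuous_const.mul ((continuous_const.mul (rpow_const_cont hc.ha.le)).add
    (continuous_const.mul continuous_id))

lemma Lam_zero (hc : Ctx a lam q0 T) : Lam a lam q0 T 0 = 0 := by
  simp [Lam, Real.zero_rpow hc.ha.ne']

lemma Lam_nonneg (hc : Ctx a lam q0 T) {t : ℝ} (ht : 0 ≤ t) : 0 ≤ Lam a lam q0 T t := by
  have h1 := (clow_pos' hc)
  have h2 := (chat_pos' hc)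
  have h3 := Mbar_nonneg' hc
  have := hc.ha
  refine mul_nonneg (div_nonneg (by positivity) (Real.rpow_nonneg h1.le a)) ?_
  refine add_nonneg (mul_nonneg (Real.rpow_nonneg h2.le _) (Real.rpow_nonneg ht _)) ?_
  exact mul_nonneg (mul_nonneg hc.ha.le (Real.rpow_nonneg h3 _)) ht

lemma Lam_mono (hc : Ctx a lam q0 T) {t : ℝ} (ht : t ∈ Icc (0:ℝ) T) :
    Lam a lam q0 T t ≤ Lam a lam q0 T T := by
  have h1 := (clow_pos' hc)
  have h2 := (chat_pos' hc)
  have h3 := Mbar_nonneg' hc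
  have h4 : t ^ a ≤ T ^ a := Real.rpow_le_rpow ht.1 ht.2 hc.ha.le
  have h5 : (0:ℝ) ≤ ((Fintype.card V : ℝ) + 1) / clow a lam q0 T ^ a :=
    div_nonneg (by positivity) (Real.rpow_nonneg h1.le a)
  refine mul_le_mul_of_nonneg_left ?_ h5
  refine add_le_add (mul_le_mul_of_nonneg_left h4 (Real.rpow_nonneg h2.le _)) ?_
  exact mul_le_mul_of_nonneg_left ht.2 (mul_nonneg hc.ha.le (Real.rpow_nonneg h3 _))

lemma Lf_nonneg (hc : Ctx a lam q0 T) {s : ℝ} (hs : 0 ≤ s) : 0 ≤ Lf a lam q0 T s := by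
  have h1 := (clow_pos' hc)
  have h2 := (chat_pos' hc)
  have h3 := Mbar_nonneg' hc
  refine mul_nonneg (div_nonneg (by positivity) (Real.rpow_nonneg h1.le a)) ?_
  refine mul_nonneg hc.ha.le (add_nonneg (mul_nonneg (Real.rpow_nonneg h2.le _)
    (Real.rpow_nonneg hs _)) (Real.rpow_nonneg h3 _))

lemma Lam_hasDeriv (hc : Ctx a lam q0 T) {t : ℝ} (ht : 0 < t) :
    HasDerivAt (Lam a lam q0 T) (Lf a lam q0 T t) t := by
  have h1 : HasDerivAt (fun u : ℝ => u ^ a) (a * t ^ (a-1)) t :=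
    Real.hasDerivAt_rpow_const (Or.inl ht.ne')
  have h2 : HasDerivAt (fun u : ℝ => chat a lam q0 T ^ (a-1) * u ^ a
      + a * Mbar lam q0 T ^ (a-1) * u)
      (chat a lam q0 T ^ (a-1) * (a * t ^ (a-1)) + a * Mbar lam q0 T ^ (a-1)) t := by
    have h3 := (h1.const_mul (chat a lam q0 T ^ (a-1)))
    have h4 := (hasDerivAt_id t).const_mul (a * Mbar lam q0 T ^ (a-1))
    simpa using h3.fun_add h4
  have h5 := h2.const_mul (((Fintype.card V : ℝ) + 1) / clow a lam q0 T ^ a)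
  refine h5.congr_deriv ?_
  simp only [Lf]
  ring

lemma LfLam_integrable (hc : Ctx a lam q0 T) {t : ℝ} (k : ℕ) :
    IntervalIntegrable (fun s => Lf a lam q0 T s * Lam a lam q0 T s ^ k) volume 0 t := by
  have h1 : IntervalIntegrable (Lf a lam q0 T) volume 0 t := by
    have heq : Lf a lam q0 T = fun s =>
        ((((Fintype.card V : ℝ) + 1) / clow a lam q0 T ^ a) * (a * chat a lam q0 T ^ (a-1)))
          * s ^ (a-1)
        + (((Fintype.card V : ℝ) + 1) / clow a lam q0 T ^ a) * (a * Mbar lam q0 T ^ (a-1)) := by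
      funext s; simp only [Lf]; ring
    rw [heq]
    exact ((intervalIntegral.intervalIntegrable_rpow' (by linarith [hc.ha])).const_mul _).add
      intervalIntegrable_const
  exact h1.mul_continuousOn (((Lam_cont hc).pow k).continuousOn)

lemma LfLam_integral (hc : Ctx a lam q0 T) {t : ℝ} (ht : 0 ≤ t) (k : ℕ) :
    ∫ s in (0:ℝ)..t, Lf a lam q0 T s * Lam a lam q0 T s ^ k
      = Lam a lam q0 T t ^ (k+1) / (k+1) := by
  have hcont : ContinuousOn (fun u => Lam a lam q0 T u ^ (k+1) / ((k:ℝ)+1)) (Icc 0 t) :=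
    (((Lam_cont hc).pow _).div_const _).continuousOn
  have hderiv : ∀ x ∈ Ioo (0:ℝ) t, HasDerivAt (fun u => Lam a lam q0 T u ^ (k+1) / ((k:ℝ)+1))
      (Lf a lam q0 T x * Lam a lam q0 T x ^ k) x := by
    intro x hx
    have h := ((Lam_hasDeriv hc hx.1).pow (k+1)).div_const ((k:ℝ)+1)
    refine h.congr_deriv ?_
    have hk : ((k:ℝ)+1) ≠ 0 := by positivity
    field_simp
    push_cast
    ring
  have := intervalIntegral.integral_eq_sub_of_hasDerivAt_of_le ht hcont hderiv
    (LfLam_integrable hc k)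
  rw [this, Lam_zero hc]
  simp [zero_pow (Nat.succ_ne_zero k)]

lemma iter_bound (hc : Ctx a lam q0 T) (f g : XT (V := V) lam q0 T) (k : ℕ) :
    ∀ (t : Icc (0:ℝ) T),
      dist (((FopS hc)^[k] f).1 t) (((FopS hc)^[k] g).1 t)
        ≤ dist f g * Lam a lam q0 T t ^ k / (k.factorial) := by
  induction k with
  | zero =>
    intro t
    simp only [Function.iterate_zero_apply, pow_zero, Nat.factorial_zero, Nat.cast_one,
      mul_one]
    rw [div_one]
    calc dist (f.1 t) (g.1 t) ≤ dist f.1 g.1 := ContinuousMap.dist_apply_le_dist t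
      _ = dist f g := (Subtype.dist_eq f g).symm
  | succ k ih =>
    intro t
    set F := (FopS hc)^[k] f with hF
    set G := (FopS hc)^[k] g with hG'
    have hit : ((FopS hc)^[k+1] f) = FopS hc F := Function.iterate_succ_apply' _ _ _
    have hit' : ((FopS hc)^[k+1] g) = FopS hc G := Function.iterate_succ_apply' _ _ _
    rw [hit, hit']
    have hD0 : (0:ℝ) ≤ dist f g := dist_nonneg
    have hLam0 : 0 ≤ Lam a lam q0 T t := Lam_nonneg hc t.2.1
    have hbound0 : (0:ℝ) ≤ dist f g * Lam a lam q0 T t ^ (k+1) / ((k+1).factorial) := by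
      positivity
    rw [dist_pi_le_iff hbound0]
    intro v
    have hcontF := hG_cont_comp' hc (extc_continuous hc.hT.le F.1) v
    have hcontG := hG_cont_comp' hc (extc_continuous hc.hT.le G.1) v
    have hintF := Continuous.intervalIntegrable (μ := volume) hcontF 0 (t:ℝ)
    have hintG := Continuous.intervalIntegrable (μ := volume) hcontG 0 (t:ℝ)
    have hcomp : dist ((FopS hc F).1 t v) ((FopS hc G).1 t v)
        = |∫ s in (0:ℝ)..(t:ℝ), (hG a lam q0 T s (extc hc.hT.le F.1 s) v
            - hG a lam q0 T s (extc hc.hT.le G.1 s) v)| := by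
      rw [Real.dist_eq]
      simp only [FopS, Fraw, ContinuousMap.coe_mk]
      rw [intervalIntegral.integral_sub hintF hintG]
      congr 1
      ring
    rw [hcomp]
    have hae : ∀ᵐ s ∂(volume.restrict (Set.uIoc (0:ℝ) (t:ℝ))),
        ‖hG a lam q0 T s (extc hc.hT.le F.1 s) v - hG a lam q0 T s (extc hc.hT.le G.1 s) v‖
          ≤ (Lf a lam q0 T s * Lam a lam q0 T s ^ k) * (dist f g / k.factorial) := by
      rw [ae_restrict_iff' measurableSet_uIoc]
      refine MeasureTheory.ae_of_all _ (fun s hs => ?_)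
      rw [Set.uIoc_of_le t.2.1] at hs
      have hsT : s ∈ Ioc (0:ℝ) T := ⟨hs.1, le_trans hs.2 t.2.2⟩
      have hsIcc : s ∈ Icc (0:ℝ) T := ⟨hsT.1.le, hsT.2⟩
      have hpF : ∀ w, extc hc.hT.le F.1 s w ≤ Mbar lam q0 T := fun w =>
        state_le_Mbar' hc w hsIcc (extc_le hc.hT.le F.2 hsIcc w)
      have hpG : ∀ w, extc hc.hT.le G.1 s w ≤ Mbar lam q0 T := fun w =>
        state_le_Mbar' hc w hsIcc (extc_le hc.hT.le G.2 hsIcc w)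
      have h1 := hG_lip' hc hsT hpF hpG v
      have h2 : dist (extc hc.hT.le F.1 s) (extc hc.hT.le G.1 s)
          ≤ dist f g * Lam a lam q0 T s ^ k / k.factorial := by
        have := ih ⟨s, hsIcc⟩
        simp only [extc, projIcc_of_mem hc.hT.le hsIcc]
        exact this
      rw [Real.norm_eq_abs]
      calc |hG a lam q0 T s (extc hc.hT.le F.1 s) v - hG a lam q0 T s (extc hc.hT.le G.1 s) v|
          ≤ Lf a lam q0 T s * dist (extc hc.hT.le F.1 s) (extc hc.hT.le G.1 s) := h1
        _ ≤ Lf a lam q0 T s * (dist f g * Lam a lam q0 T s ^ k / k.factorial) :=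
            mul_le_mul_of_nonneg_left h2 (Lf_nonneg hc hsT.1.le)
        _ = (Lf a lam q0 T s * Lam a lam q0 T s ^ k) * (dist f g / k.factorial) := by ring
    have hintbound : IntervalIntegrable
        (fun s => (Lf a lam q0 T s * Lam a lam q0 T s ^ k) * (dist f g / k.factorial))
        volume 0 (t:ℝ) := (LfLam_integrable hc k).mul_const _
    have h3 := intervalIntegral.norm_integral_le_abs_of_norm_le hae hintbound
    rw [Real.norm_eq_abs] at h3
    refine le_trans h3 ?_
    rw [intervalIntegral.integral_mul_const, LfLam_integral hc t.2.1 k]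
    rw [abs_of_nonneg (by positivity)]
    rw [Nat.factorial_succ]
    push_cast
    rw [div_mul_div_comm]
    apply le_of_eq
    ring


lemma Fraw_apply (hc : Ctx a lam q0 T) (f : C(Icc (0:ℝ) T, V → ℝ)) (t : Icc (0:ℝ) T) (v : V) :
    Fraw hc f t v = q0 v + ∫ s in (0:ℝ)..(t:ℝ), hG a lam q0 T s (extc hc.hT.le f s) v := rfl

lemma dist_iterate (hc : Ctx a lam q0 T) (n : ℕ) (f g : XT (V := V) lam q0 T) :
    dist ((FopS hc)^[n] f) ((FopS hc)^[n] g)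
      ≤ (Lam a lam q0 T T ^ n / n.factorial) * dist f g := by
  have hL0 : 0 ≤ Lam a lam q0 T T := Lam_nonneg hc hc.hT.le
  have h0 : (0:ℝ) ≤ Lam a lam q0 T T ^ n / n.factorial * dist f g := by positivity
  rw [Subtype.dist_eq, ContinuousMap.dist_le h0]
  intro t
  refine le_trans (iter_bound hc f g n t) ?_
  have h1 : Lam a lam q0 T (t:ℝ) ^ n ≤ Lam a lam q0 T T ^ n :=
    pow_le_pow_left₀ (Lam_nonneg hc t.2.1) (Lam_mono hc t.2) n
  have hd : (0:ℝ) ≤ dist f g := dist_nonneg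
  rw [div_mul_eq_mul_div, mul_comm]
  gcongr

lemma exists_unique_fixed (hc : Ctx a lam q0 T) :
    ∃! u : XT (V := V) lam q0 T, FopS hc u = u := by
  haveI : Nonempty (XT (V := V) lam q0 T) := XT_nonempty hc
  haveI : CompleteSpace (XT (V := V) lam q0 T) := XT_closed.completeSpace_coe
  obtain ⟨n, hn⟩ : ∃ n : ℕ, Lam a lam q0 T T ^ n / n.factorial < 1 := by
    have h := FloorSemiring.tendsto_pow_div_factorial_atTop (Lam a lam q0 T T)
    have h2 := h.eventually (eventually_lt_nhds (show (0:ℝ) < 1 by norm_num))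
    exact h2.exists
  have hnn : (0:ℝ) ≤ Lam a lam q0 T T ^ n / n.factorial := by
    have := Lam_nonneg hc hc.hT.le
    positivity
  set K : NNReal := Real.toNNReal (Lam a lam q0 T T ^ n / n.factorial) with hK
  have hKcoe : (K : ℝ) = Lam a lam q0 T T ^ n / n.factorial := Real.coe_toNNReal _ hnn
  have hcontr : ContractingWith K ((FopS hc)^[n]) := by
    constructor
    · rw [← NNReal.coe_lt_one, hKcoe]; exact hn
    · exact LipschitzWith.of_dist_le_mul fun f g => by
        rw [hKcoe]; exact dist_iterate hc n f g
  set u0 := hcontr.fixedPoint ((FopS hc)^[n]) with hu0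
  have h1 : IsFixedPt ((FopS hc)^[n]) u0 := hcontr.fixedPoint_isFixedPt
  have h2 : IsFixedPt ((FopS hc)^[n]) (FopS hc u0) := by
    unfold IsFixedPt
    rw [← Function.iterate_succ_apply, Function.iterate_succ_apply']
    rw [h1]
  have hfix : FopS hc u0 = u0 := hcontr.fixedPoint_unique' h2 h1
  refine ⟨u0, hfix, ?_⟩
  intro y hy
  exact hcontr.fixedPoint_unique' ((Function.IsFixedPt.iterate hy n)) h1

noncomputable def sol (hc : Ctx a lam q0 T) : XT (V := V) lam q0 T :=
  (exists_unique_fixed hc).choose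

lemma sol_fixed (hc : Ctx a lam q0 T) : FopS hc (sol hc) = sol hc :=
  (exists_unique_fixed hc).choose_spec.1

lemma sol_unique (hc : Ctx a lam q0 T) {u : XT (V := V) lam q0 T} (hu : FopS hc u = u) :
    u = sol hc :=
  ((exists_unique_fixed hc).choose_spec.2 u hu).trans
    (((exists_unique_fixed hc).choose_spec.2 _ (sol_fixed hc))).symm

noncomputable def solR (hc : Ctx a lam q0 T) : ℝ → V → ℝ := extc hc.hT.le (sol hc).1

lemma solR_cont (hc : Ctx a lam q0 T) : Continuous (solR hc) :=
  (sol hc).1.continuous.comp continuous_projIcc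

lemma solR_eqn (hc : Ctx a lam q0 T) {t : ℝ} (ht : t ∈ Icc (0:ℝ) T) (v : V) :
    solR hc t v = q0 v + ∫ s in (0:ℝ)..t, hG a lam q0 T s (solR hc s) v := by
  have h := congrArg Subtype.val (sol_fixed hc)
  have h2 := congrFun (congrArg DFunLike.coe h) (projIcc 0 T hc.hT.le t)
  have h3 := congrFun h2 v
  simp only [FopS] at h3
  rw [Fraw_apply] at h3
  rw [projIcc_of_mem hc.hT.le ht] at h3
  simp only [solR, extc, projIcc_of_mem hc.hT.le ht]
  exact h3.symm

lemma solR_bounds (hc : Ctx a lam q0 T) {t : ℝ} (ht : t ∈ Icc (0:ℝ) T) (v : V) :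
    q0 v + (lam v - 1) * t ≤ solR hc t v ∧ solR hc t v ≤ q0 v + lam v * t := by
  have := (sol hc).2 ⟨t, ht⟩ v
  simpa [solR, extc, projIcc_of_mem hc.hT.le ht] using this

lemma solR_zero (hc : Ctx a lam q0 T) : solR hc 0 = q0 := by
  funext v
  have h := solR_bounds hc (left_mem_Icc.mpr hc.hT.le) v
  simp only [mul_zero] at h
  linarith [h.1, h.2]

lemma solR_hasDeriv (hc : Ctx a lam q0 T) {t : ℝ} (ht : t ∈ Ioo (0:ℝ) T) :
    HasDerivAt (solR hc) (fun v => hG a lam q0 T t (solR hc t) v) t := by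
  rw [hasDerivAt_pi]
  intro v
  have hcont := hG_cont_comp' hc (solR_cont hc) v
  have hprim : HasDerivAt (fun u : ℝ => q0 v + ∫ s in (0:ℝ)..u, hG a lam q0 T s (solR hc s) v)
      (hG a lam q0 T t (solR hc t) v) t := by
    refine HasDerivAt.const_add _ ?_
    exact intervalIntegral.integral_hasDerivAt_right
      (Continuous.intervalIntegrable (μ := volume) hcont 0 t)
      (hcont.stronglyMeasurableAtFilter volume (nhds t)) hcont.continuousAt
  refine hprim.congr_of_eventuallyEq ?_
  have hmem : Ioo (0:ℝ) T ∈ nhds t := isOpen_Ioo.mem_nhds ht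
  refine Filter.eventuallyEq_of_mem hmem (fun u hu => ?_)
  exact solR_eqn hc ⟨hu.1.le, hu.2.le⟩ v

lemma solR_sum (hc : Ctx a lam q0 T) {t : ℝ} (ht : t ∈ Icc (0:ℝ) T) :
    ∑ v, solR hc t v = mf lam q0 t := by
  have h1 : ∀ v : V, solR hc t v = q0 v + ∫ s in (0:ℝ)..t, hG a lam q0 T s (solR hc s) v :=
    fun v => solR_eqn hc ht v
  rw [Finset.sum_congr rfl (fun v _ => h1 v)]
  rw [Finset.sum_add_distrib]
  rw [← intervalIntegral.integral_finset_sum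
    (fun v _ => Continuous.intervalIntegrable (μ := volume)
      (hG_cont_comp' hc (solR_cont hc) v) 0 t)]
  have h2 : ∀ s : ℝ, ∑ v, hG a lam q0 T s (solR hc s) v = (∑ v, lam v) - 1 :=
    fun s => hG_sum' hc s (solR hc s)
  rw [intervalIntegral.integral_congr (g := fun _ => (∑ v, lam v) - 1) (fun s _ => h2 s)]
  rw [intervalIntegral.integral_const]
  simp only [mf, sub_zero, smul_eq_mul]
  ring

/-- drift bound when a coordinate is below the barrier -/
lemma hG_below (hc : Ctx a lam q0 T) {u : ℝ} (hu : u ∈ Ioc (0:ℝ) T) {q : V → ℝ} (v : V)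
    (hqv : q v < kap a lam q0 v * phif lam q0 u)
    (hqlow : q0 v + (lam v - 1) * u ≤ q v)
    (hsum : ∑ w, q w = mf lam q0 u)
    (hqub : ∀ w, q w ≤ q0 w + lam w * u) :
    lam v / 2 ≤ hG a lam q0 T u q v := by
  have huIcc : u ∈ Icc (0:ℝ) T := ⟨hu.1.le, hu.2⟩
  have hmu : 0 < mf lam q0 u := lt_of_lt_of_le (mlow_pos' hc) (mf_lower'' hc.hT huIcc)
  have hphiu : 0 ≤ phif lam q0 u := phif_nonneg hu.1.le hmu.le
  have hkv := kap_pos'' hc v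
  -- the clamp at v equals the barrier
  have hlbv : lbf a lam q0 T v u = kap a lam q0 v * phif lam q0 u := by
    simp only [lbf, scf_eq huIcc]
    refine max_eq_left ?_
    have h1 : q0 v - u ≤ q0 v + (lam v - 1) * u := by nlinarith [hc.hlam v, hu.1.le]
    linarith [hqlow, hqv]
  have hclv : clf a lam q0 T v u (q v) = kap a lam q0 v * phif lam q0 u := by
    simp only [clf, hlbv]
    exact max_eq_left hqv.le
  -- denominator lower bound via the coordinate above average
  obtain ⟨w, -, hw⟩ : ∃ w ∈ Finset.univ, mf lam q0 u / (Fintype.card V : ℝ) ≤ q w := by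
    refine Finset.exists_le_of_sum_le Finset.univ_nonempty ?_
    rw [Finset.sum_const, Finset.card_univ, nsmul_eq_mul, hsum]
    rw [mul_div_cancel₀ _ (card_pos' (V := V)).ne']
  have hdenom : (mf lam q0 u / (Fintype.card V : ℝ)) ^ a ≤ ∑ w, clf a lam q0 T w u (q w) ^ a := by
    have h1 : mf lam q0 u / (Fintype.card V : ℝ) ≤ clf a lam q0 T w u (q w) :=
      le_trans hw (le_max_right _ _)
    calc (mf lam q0 u / (Fintype.card V : ℝ)) ^ a ≤ clf a lam q0 T w u (q w) ^ a :=
          Real.rpow_le_rpow (div_nonneg hmu.le (card_pos' (V := V)).le) h1 hc.ha.le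
      _ ≤ _ := Finset.single_le_sum (fun x _ => Real.rpow_nonneg (clf_nonneg' hc x u (q x)) a)
          (Finset.mem_univ w)
  -- ratio bound
  have hmn : 0 < mf lam q0 u / (Fintype.card V : ℝ) := div_pos hmu card_pos'
  have hmna : 0 < (mf lam q0 u / (Fintype.card V : ℝ)) ^ a := Real.rpow_pos_of_pos hmn a
  have hratio : clf a lam q0 T v u (q v) ^ a / ∑ w, clf a lam q0 T w u (q w) ^ a
      ≤ lam v / 2 := by
    rw [hclv]
    set X := (kap a lam q0 v * phif lam q0 u) ^ a with hX
    have hX0 : 0 ≤ X := Real.rpow_nonneg (mul_nonneg hkv.le hphiu) a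
    have h2 : X / (∑ w, clf a lam q0 T w u (q w) ^ a)
        ≤ X / (mf lam q0 u / (Fintype.card V : ℝ)) ^ a :=
      div_le_div_of_nonneg_left hX0 hmna hdenom
    refine le_trans h2 ?_
    have h3 : X / (mf lam q0 u / (Fintype.card V : ℝ)) ^ a
        = ((kap a lam q0 v * phif lam q0 u) / (mf lam q0 u / (Fintype.card V : ℝ))) ^ a := by
      rw [Real.div_rpow (mul_nonneg hkv.le hphiu) hmn.le]
    rw [h3]
    have h4 : (kap a lam q0 v * phif lam q0 u) / (mf lam q0 u / (Fintype.card V : ℝ))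
        ≤ kap a lam q0 v * (Fintype.card V : ℝ) := by
      rw [div_le_iff₀ hmn]
      have h5 : kap a lam q0 v * phif lam q0 u ≤ kap a lam q0 v * mf lam q0 u :=
        mul_le_mul_of_nonneg_left (phif_le_mf hu.1.le hmu.le) hkv.le
      calc kap a lam q0 v * phif lam q0 u ≤ kap a lam q0 v * mf lam q0 u := h5
        _ = kap a lam q0 v * (Fintype.card V : ℝ) * (mf lam q0 u / (Fintype.card V : ℝ)) := by
            field_simp
    calc ((kap a lam q0 v * phif lam q0 u) / (mf lam q0 u / (Fintype.card V : ℝ))) ^ a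
        ≤ (kap a lam q0 v * (Fintype.card V : ℝ)) ^ a :=
          Real.rpow_le_rpow (div_nonneg (mul_nonneg hkv.le hphiu) hmn.le) h4 hc.ha.le
      _ ≤ lam v / 2 := kap_card_rpow_le' hc v
  simp only [hG]
  linarith [hratio]

lemma solR_barrier (hc : Ctx a lam q0 T) {t : ℝ} (ht : t ∈ Icc (0:ℝ) T) (v : V) :
    kap a lam q0 v * phif lam q0 t ≤ solR hc t v := by
  by_contra hcon
  push_neg at hcon
  set ψ : ℝ → ℝ := fun u => solR hc u v - kap a lam q0 v * phif lam q0 u with hψ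
  have hψcont : Continuous ψ :=
    ((continuous_apply v).comp (solR_cont hc)).sub (continuous_const.mul (phif_cont lam q0))
  have hψ0 : 0 ≤ ψ 0 := by
    have h1 : phif lam q0 0 = 0 := by simp [phif]
    simp only [hψ, solR_zero hc, h1, mul_zero, sub_zero]
    exact hc.hq0 v
  set Sset : Set ℝ := {u | u ∈ Icc 0 t ∧ 0 ≤ ψ u} with hSset
  have hclosed : IsClosed Sset :=
    (isClosed_Icc.preimage continuous_id).inter (isClosed_le continuous_const hψcont)
  have hsub : Sset ⊆ Icc 0 t := fun u hu => hu.1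
  have hcomp : IsCompact Sset := isCompact_Icc.of_isClosed_subset hclosed hsub
  have hne : Sset.Nonempty := ⟨0, ⟨left_mem_Icc.mpr ht.1, hψ0⟩⟩
  set t₁ := sSup Sset with ht₁
  have ht₁mem : t₁ ∈ Sset := hcomp.sSup_mem hne
  have ht₁t : t₁ ≤ t := (hsub ht₁mem).2
  have hψt : ψ t < 0 := by simp only [hψ]; linarith
  have ht₁lt : t₁ < t := lt_of_le_of_ne ht₁t (by
    intro h; rw [h] at ht₁mem; exact absurd ht₁mem.2 (not_le.mpr hψt))
  have hneg : ∀ u ∈ Ioc t₁ t, ψ u < 0 := by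
    intro u hu
    by_contra hge
    push_neg at hge
    have : u ∈ Sset := ⟨⟨le_trans (hsub ht₁mem).1 hu.1.le, hu.2⟩, hge⟩
    have : u ≤ t₁ := le_csSup hcomp.bddAbove this
    exact absurd hu.1 (not_lt.mpr this)
  have ht₁0 : 0 ≤ t₁ := (hsub ht₁mem).1
  -- strict monotonicity on [t₁, t]
  have hmono : StrictMonoOn ψ (Icc t₁ t) := by
    refine strictMonoOn_of_deriv_pos (convex_Icc _ _) hψcont.continuousOn ?_
    intro u hu
    rw [interior_Icc] at hu
    have huoo : u ∈ Ioo (0:ℝ) T := ⟨lt_of_le_of_lt ht₁0 hu.1, lt_of_lt_of_le hu.2 ht.2⟩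
    have huIoc : u ∈ Ioc (0:ℝ) T := ⟨huoo.1, huoo.2.le⟩
    have huIcc : u ∈ Icc (0:ℝ) T := ⟨huoo.1.le, huoo.2.le⟩
    have hD1 : HasDerivAt (fun r => solR hc r v) (hG a lam q0 T u (solR hc u) v) u :=
      hasDerivAt_pi.mp (solR_hasDeriv hc huoo) v
    have hD2 : HasDerivAt (fun r => kap a lam q0 v * phif lam q0 r)
        (kap a lam q0 v * (Real.exp (-u) * mf lam q0 u
          + (1 - Real.exp (-u)) * ((∑ w, lam w) - 1))) u :=
      (phif_hasDeriv lam q0 u).const_mul _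
    have hDψ : HasDerivAt ψ (hG a lam q0 T u (solR hc u) v
        - kap a lam q0 v * (Real.exp (-u) * mf lam q0 u
          + (1 - Real.exp (-u)) * ((∑ w, lam w) - 1))) u := hD1.sub hD2
    rw [hDψ.deriv]
    have hψu : ψ u < 0 := hneg u ⟨hu.1, hu.2.le⟩
    have hqv : solR hc u v < kap a lam q0 v * phif lam q0 u := by
      simp only [hψ] at hψu; linarith
    have hbelow := hG_below hc huIoc v hqv (solR_bounds hc huIcc v).1
      (solR_sum hc huIcc) (fun w => (solR_bounds hc huIcc w).2)
    have hslope : kap a lam q0 v * (Real.exp (-u) * mf lam q0 u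
        + (1 - Real.exp (-u)) * ((∑ w, lam w) - 1)) < lam v / 2 := by
      refine lt_of_le_of_lt ?_ (kap_Phib_lt' hc v)
      exact mul_le_mul_of_nonneg_left (phif_deriv_le' hc huoo.1.le) (kap_pos'' hc v).le
    linarith
  have h1 : ψ t₁ < ψ t := hmono ⟨le_refl t₁, ht₁t⟩ ⟨ht₁t, le_refl t⟩ ht₁lt
  linarith [ht₁mem.2, hψt, h1]

lemma solR_nonneg (hc : Ctx a lam q0 T) {t : ℝ} (ht : t ∈ Icc (0:ℝ) T) (v : V) :
    0 ≤ solR hc t v := by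
  refine le_trans ?_ (solR_barrier hc ht v)
  have hmu : 0 < mf lam q0 t := lt_of_lt_of_le (mlow_pos' hc) (mf_lower'' hc.hT ht)
  exact mul_nonneg (kap_pos'' hc v).le (phif_nonneg ht.1 hmu.le)

lemma solR_pos (hc : Ctx a lam q0 T) {t : ℝ} (ht : t ∈ Ioc (0:ℝ) T) (v : V) :
    0 < solR hc t v := by
  have htIcc : t ∈ Icc (0:ℝ) T := ⟨ht.1.le, ht.2⟩
  refine lt_of_lt_of_le ?_ (solR_barrier hc htIcc v)
  have hmu : 0 < mf lam q0 t := lt_of_lt_of_le (mlow_pos' hc) (mf_lower'' hc.hT htIcc)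
  exact mul_pos (kap_pos'' hc v) (phif_pos ht.1 hmu)

lemma solR_clamp_inactive (hc : Ctx a lam q0 T) {t : ℝ} (ht : t ∈ Ioc (0:ℝ) T) (w : V) :
    clf a lam q0 T w t (solR hc t w) = solR hc t w := by
  have htIcc : t ∈ Icc (0:ℝ) T := ⟨ht.1.le, ht.2⟩
  refine max_eq_right ?_
  simp only [lbf, scf_eq htIcc]
  refine max_le (solR_barrier hc htIcc w) ?_
  have h := (solR_bounds hc htIcc w).1
  have := hc.hlam w
  nlinarith [ht.1.le]

lemma solR_gdrift (hc : Ctx a lam q0 T) {t : ℝ} (ht : t ∈ Ioo (0:ℝ) T) :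
    HasDerivAt (solR hc) (gdrift a lam (solR hc t)) t := by
  have h := solR_hasDeriv hc ht
  have heq : (fun v => hG a lam q0 T t (solR hc t) v) = gdrift a lam (solR hc t) := by
    funext v
    simp only [hG, gdrift]
    rw [solR_clamp_inactive hc ⟨ht.1, ht.2.le⟩ v]
    congr 1
    congr 1
    exact Finset.sum_congr rfl fun w _ => by
      rw [solR_clamp_inactive hc ⟨ht.1, ht.2.le⟩ w]
  rw [← heq]
  exact h


lemma lbf_T_eq (hTT' : T ≤ T') {s : ℝ} (hs : s ∈ Icc (0:ℝ) T) (v : V) :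
    lbf a lam q0 T v s = lbf a lam q0 T' v s := by
  have hs' : s ∈ Icc (0:ℝ) T' := ⟨hs.1, hs.2.trans hTT'⟩
  simp only [lbf, scf_eq hs, scf_eq hs']

lemma hG_T_eq (hTT' : T ≤ T') {s : ℝ} (hs : s ∈ Icc (0:ℝ) T) (q : V → ℝ) (v : V) :
    hG a lam q0 T s q v = hG a lam q0 T' s q v := by
  simp only [hG, clf, lbf_T_eq hTT' hs]

lemma solR_compat (hc : Ctx a lam q0 T) (hc' : Ctx a lam q0 T') (hTT' : T ≤ T')
    {t : ℝ} (ht : t ∈ Icc (0:ℝ) T) : solR hc' t = solR hc t := by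
  have hsub : ∀ u : Icc (0:ℝ) T, (u : ℝ) ∈ Icc (0:ℝ) T' :=
    fun u => ⟨u.2.1, u.2.2.trans hTT'⟩
  set r : C(Icc (0:ℝ) T, V → ℝ) :=
    ⟨fun u => (sol hc').1 ⟨u.1, hsub u⟩,
     (sol hc').1.continuous.comp (continuous_subtype_val.subtype_mk _)⟩ with hr
  have hrval : ∀ {s : ℝ} (hs : s ∈ Icc (0:ℝ) T), extc hc.hT.le r s = solR hc' s := by
    intro s hs
    have hs' : s ∈ Icc (0:ℝ) T' := ⟨hs.1, hs.2.trans hTT'⟩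
    simp only [extc, hr, ContinuousMap.coe_mk, projIcc_of_mem hc.hT.le hs]
    simp only [solR, extc, projIcc_of_mem hc'.hT.le hs']
  have hrmem : r ∈ XT lam q0 T := by
    intro u v
    have := (sol hc').2 ⟨u.1, hsub u⟩ v
    simpa [hr] using this
  have hfix : FopS hc (⟨r, hrmem⟩ : XT (V := V) lam q0 T) = ⟨r, hrmem⟩ := by
    refine Subtype.ext ?_
    refine ContinuousMap.ext fun u => funext fun v => ?_
    show Fraw hc r u v = r u v
    rw [Fraw_apply hc r u v]
    have hint_congr : ∫ s in (0:ℝ)..(u:ℝ), hG a lam q0 T s (extc hc.hT.le r s) v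
        = ∫ s in (0:ℝ)..(u:ℝ), hG a lam q0 T' s (solR hc' s) v := by
      refine intervalIntegral.integral_congr fun s hs => ?_
      rw [Set.uIcc_of_le u.2.1] at hs
      have hsT : s ∈ Icc (0:ℝ) T := ⟨hs.1, hs.2.trans u.2.2⟩
      rw [hrval hsT, hG_T_eq hTT' hsT]
    rw [hint_congr]
    have := solR_eqn hc' (t := (u:ℝ)) ⟨u.2.1, u.2.2.trans hTT'⟩ v
    rw [← this]
    have := hrval u.2
    simp only [extc, projIcc_of_mem hc.hT.le u.2] at this
    rw [this]
  have hsol : (⟨r, hrmem⟩ : XT (V := V) lam q0 T) = sol hc := sol_unique hc hfix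
  have h1 : solR hc t = r ⟨t, ht⟩ := by
    have := congrArg Subtype.val hsol
    simp only [solR, extc, projIcc_of_mem hc.hT.le ht, ← this]
  rw [h1]
  have ht' : t ∈ Icc (0:ℝ) T' := ⟨ht.1, ht.2.trans hTT'⟩
  simp only [hr, ContinuousMap.coe_mk, solR, extc, projIcc_of_mem hc'.hT.le ht']

theorem mainCase (ha : 0 < a) (hlam : ∀ v, 0 < lam v) (hq0 : ∀ v, 0 ≤ q0 v)
    (hs0 : 0 < ∑ v, q0 v) : ∃ f : ℝ → V → ℝ, IsCGSolution a lam q0 f := by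
  rcases le_or_gt 1 (∑ v, lam v) with hS | hS
  · -- supercritical / critical case : every horizon works
    have hmk : ∀ {T : ℝ}, 0 < T → Ctx a lam q0 T := fun {T} hT =>
      ⟨ha, hlam, hq0, hs0, hT, by simp only [mf]; nlinarith⟩
    have habs : ∀ t : ℝ, (0:ℝ) < |t| + 1 := fun t => by positivity
    set F : ℝ → V → ℝ := fun t => solR (hmk (habs t)) t with hF
    have keyA : ∀ {T : ℝ} (hcT : Ctx a lam q0 T) {t : ℝ}, 0 ≤ t → t ≤ T →
        F t = solR hcT t := by
      intro T hcT t ht htT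
      have htabs : t ≤ |t| + 1 := le_trans (le_abs_self t) (by linarith [abs_nonneg t])
      rcases le_total (|t| + 1) T with h | h
      · exact (solR_compat (hmk (habs t)) hcT h ⟨ht, htabs⟩).symm
      · exact solR_compat hcT (hmk (habs t)) h ⟨ht, htT⟩
    refine ⟨F, ?_, ?_, ?_, ?_, ?_⟩
    · -- continuity
      intro t ht
      have hT' : (0:ℝ) < t + 2 := by simp only [Set.mem_Ici] at ht; linarith
      set hcT := hmk hT'
      have hmem : {s : ℝ | F s = solR hcT s} ∈ nhdsWithin t (Ici 0) := by
        have h1 : Iio (t+1) ∩ Ici 0 ∈ nhdsWithin t (Ici 0) := by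
          refine Filter.inter_mem ?_ self_mem_nhdsWithin
          exact mem_nhdsWithin_of_mem_nhds (Iio_mem_nhds (by simp only [Set.mem_Ici] at ht; linarith))
        refine Filter.mem_of_superset h1 fun s hs => ?_
        have hs1 : s < t + 1 := hs.1
        have hs2 : (0:ℝ) ≤ s := hs.2
        exact keyA hcT hs2 (by linarith)
      have heq : F t = solR hcT t := keyA hcT ht (by simp only [Set.mem_Ici] at ht; linarith)
      exact ((solR_cont hcT).continuousAt.continuousWithinAt).congr_of_eventuallyEq hmem heq
    · -- initial value
      rw [keyA (hmk one_pos) le_rfl zero_le_one]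
      exact solR_zero _
    · -- nonnegativity
      intro t ht v
      rw [keyA (hmk (show (0:ℝ) < t + 1 by linarith)) ht (by linarith)]
      exact solR_nonneg _ ⟨ht, by linarith⟩ v
    · -- sum
      intro t ht
      show ∑ v, F t v = max (mf lam q0 t) 0
      rw [keyA (hmk (show (0:ℝ) < t + 1 by linarith)) ht (by linarith)]
      rw [solR_sum _ ⟨ht, by linarith⟩]
      have hmf : 0 ≤ mf lam q0 t := by simp only [mf]; nlinarith
      rw [max_eq_left hmf]
    · -- derivative
      intro t ht hFt
      have hT' : (0:ℝ) < t + 2 := by linarith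
      set hcT := hmk hT'
      have hev : F =ᶠ[nhds t] solR hcT := by
        have h1 : Ioo (0:ℝ) (t+1) ∈ nhds t := isOpen_Ioo.mem_nhds ⟨ht, by linarith⟩
        exact Filter.eventuallyEq_of_mem h1 fun s hs => keyA hcT hs.1.le (by linarith [hs.2])
      have hD := solR_gdrift hcT (t := t) ⟨ht, by linarith⟩
      have hD2 := hD.congr_of_eventuallyEq hev
      rw [keyA hcT ht.le (by linarith)]
      exact hD2
  · -- subcritical case
    set S := ∑ v, lam v with hSdef
    set tstar := (∑ v, q0 v) / (1 - S) with htstar_def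
    have h1S : 0 < 1 - S := by linarith
    have htstar : 0 < tstar := div_pos hs0 h1S
    have hmf_eq : ∀ t : ℝ, mf lam q0 t = (1 - S) * (tstar - t) := by
      intro t
      simp only [mf, htstar_def, ← hSdef]
      field_simp
      ring
    have hmk : ∀ {T : ℝ}, 0 < T → T < tstar → Ctx a lam q0 T := fun {T} hT hTs =>
      ⟨ha, hlam, hq0, hs0, hT, by rw [hmf_eq]; nlinarith⟩
    set Tof : ℝ → ℝ := fun t => (max t 0 + tstar) / 2 with hTof
    have hTof_pos : ∀ t, 0 < Tof t := fun t => by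
      have := le_max_right t 0
      simp only [hTof]; nlinarith
    have hTof_lt : ∀ {t : ℝ}, t < tstar → Tof t < tstar := fun {t} h => by
      have h2 : max t 0 < tstar := max_lt h htstar
      simp only [hTof]; nlinarith
    have hlt_Tof : ∀ {t : ℝ}, t < tstar → t < Tof t := fun {t} h => by
      have := le_max_left t 0
      simp only [hTof]; nlinarith
    set F : ℝ → V → ℝ := fun t =>
      if h : t < tstar then solR (hmk (hTof_pos t) (hTof_lt h)) t else 0 with hF
    have keyB : ∀ {T : ℝ} (hcT : Ctx a lam q0 T) (hTs : T < tstar) {t : ℝ}, 0 ≤ t → t ≤ T →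
        F t = solR hcT t := by
      intro T hcT hTs t ht htT
      have htst : t < tstar := lt_of_le_of_lt htT hTs
      have hFt : F t = solR (hmk (hTof_pos t) (hTof_lt htst)) t := by
        simp only [hF]; rw [dif_pos htst]
      rw [hFt]
      rcases le_total (Tof t) T with h | h
      · exact (solR_compat (hmk (hTof_pos t) (hTof_lt htst)) hcT h
          ⟨ht, (hlt_Tof htst).le⟩).symm
      · exact solR_compat hcT (hmk (hTof_pos t) (hTof_lt htst)) h ⟨ht, htT⟩
    have hFzero : ∀ {t : ℝ}, tstar ≤ t → F t = 0 := fun {t} h => by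
      simp only [hF]; rw [dif_neg (not_lt.mpr h)]
    have hFbound : ∀ {s : ℝ}, 0 ≤ s → s < tstar → dist (F s) (0 : V → ℝ)
        ≤ (1 - S) * (tstar - s) := by
      intro s hs hst
      have hcS := hmk (hTof_pos s) (hTof_lt hst)
      have hFs : F s = solR hcS s := keyB hcS (hTof_lt hst) hs (hlt_Tof hst).le
      have hnn : (0:ℝ) ≤ (1 - S) * (tstar - s) := by nlinarith
      rw [dist_pi_le_iff hnn]
      intro v
      have hsIcc : s ∈ Icc (0:ℝ) (Tof s) := ⟨hs, (hlt_Tof hst).le⟩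
      have h1 : 0 ≤ F s v := by rw [hFs]; exact solR_nonneg hcS hsIcc v
      have h2 : F s v ≤ (1 - S) * (tstar - s) := by
        rw [hFs]
        calc solR hcS s v ≤ ∑ w, solR hcS s w :=
              Finset.single_le_sum (fun w _ => solR_nonneg hcS hsIcc w) (Finset.mem_univ v)
          _ = mf lam q0 s := solR_sum hcS hsIcc
          _ = (1 - S) * (tstar - s) := hmf_eq s
      simp only [Pi.zero_apply, Real.dist_eq, sub_zero]
      rw [abs_of_nonneg h1]
      exact h2
    refine ⟨F, ?_, ?_, ?_, ?_, ?_⟩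
    · -- continuity
      intro t ht
      simp only [Set.mem_Ici] at ht
      rcases lt_trichotomy t tstar with hlt | heq | hgt
      · -- interior
        set T' := Tof t
        have hcT := hmk (hTof_pos t) (hTof_lt hlt)
        have hmem : {s : ℝ | F s = solR hcT s} ∈ nhdsWithin t (Ici 0) := by
          have h1 : Iio T' ∩ Ici 0 ∈ nhdsWithin t (Ici 0) := by
            refine Filter.inter_mem ?_ self_mem_nhdsWithin
            exact mem_nhdsWithin_of_mem_nhds (Iio_mem_nhds (hlt_Tof hlt))
          refine Filter.mem_of_superset h1 fun s hs => ?_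
          exact keyB hcT (hTof_lt hlt) hs.2 hs.1.le
        have heq : F t = solR hcT t := keyB hcT (hTof_lt hlt) ht (hlt_Tof hlt).le
        exact ((solR_cont hcT).continuousAt.continuousWithinAt).congr_of_eventuallyEq hmem heq
      · -- boundary point tstar
        rw [Metric.continuousWithinAt_iff]
        intro ε hε
        refine ⟨ε / (2 * (1 - S)), by positivity, fun {y} hy hdy => ?_⟩
        rw [heq] at hdy ⊢
        rw [hFzero le_rfl]
        rcases le_or_gt tstar y with h | h
        · rw [hFzero h]
          simpa using hε
        · have hbd := hFbound hy h
          have hdy' : tstar - y < ε / (2 * (1 - S)) := by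
            rw [Real.dist_eq, abs_of_neg (by linarith : y - tstar < 0)] at hdy
            linarith
          refine lt_of_le_of_lt hbd ?_
          calc (1 - S) * (tstar - y) < (1 - S) * (ε / (2 * (1 - S))) := by
                exact mul_lt_mul_of_pos_left hdy' h1S
            _ = ε / 2 := by field_simp
            _ < ε := by linarith
      · -- beyond tstar
        have hmem : {s : ℝ | F s = 0} ∈ nhdsWithin t (Ici 0) := by
          refine mem_nhdsWithin_of_mem_nhds ?_
          refine Filter.mem_of_superset (Ioi_mem_nhds hgt) fun s hs => hFzero hs.le
        exact (continuousWithinAt_const (b := (0 : V → ℝ))).congr_of_eventuallyEq hmem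
          (hFzero hgt.le)
    · -- initial value
      have h0 : (0:ℝ) < tstar := htstar
      rw [keyB (hmk (half_pos htstar) (half_lt_self htstar)) (half_lt_self htstar) le_rfl
        (half_pos htstar).le]
      exact solR_zero _
    · -- nonnegativity
      intro t ht v
      rcases lt_or_ge t tstar with h | h
      · rw [keyB (hmk (hTof_pos t) (hTof_lt h)) (hTof_lt h) ht (hlt_Tof h).le]
        exact solR_nonneg _ ⟨ht, (hlt_Tof h).le⟩ v
      · rw [hFzero h]; exact le_refl 0
    · -- sum
      intro t ht
      rcases lt_or_ge t tstar with h | h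
      · show ∑ v, F t v = max (mf lam q0 t) 0
        rw [keyB (hmk (hTof_pos t) (hTof_lt h)) (hTof_lt h) ht (hlt_Tof h).le]
        rw [solR_sum _ ⟨ht, (hlt_Tof h).le⟩]
        have hmf : 0 ≤ mf lam q0 t := by rw [hmf_eq]; nlinarith
        rw [max_eq_left hmf]
      · show ∑ v, F t v = max (mf lam q0 t) 0
        rw [hFzero h]
        have hmf : mf lam q0 t ≤ 0 := by rw [hmf_eq]; nlinarith
        simp only [Pi.zero_apply, Finset.sum_const_zero]
        rw [eq_comm, max_eq_right hmf]
    · -- derivative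
      intro t ht hFt
      rcases lt_or_ge t tstar with h | h
      · set T' := Tof t
        have hcT := hmk (hTof_pos t) (hTof_lt h)
        have hev : F =ᶠ[nhds t] solR hcT := by
          have h1 : Ioo (0:ℝ) T' ∈ nhds t := isOpen_Ioo.mem_nhds ⟨ht, hlt_Tof h⟩
          exact Filter.eventuallyEq_of_mem h1 fun s hs =>
            keyB hcT (hTof_lt h) hs.1.le hs.2.le
        have hD := solR_gdrift hcT (t := t) ⟨ht, hlt_Tof h⟩
        have hD2 := hD.congr_of_eventuallyEq hev
        rw [keyB hcT (hTof_lt h) ht.le (hlt_Tof h).le]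
        exact hD2
      · exact absurd (hFzero h) hFt


theorem trivialCase (hq0 : ∀ v, 0 ≤ q0 v) (hs0 : ∑ v, q0 v = 0)
    (hS : ∑ v, lam v ≤ 1) : ∃ f : ℝ → V → ℝ, IsCGSolution a lam q0 f := by
  have hq00 : ∀ v, q0 v = 0 := by
    intro v
    have := (Finset.sum_eq_zero_iff_of_nonneg (fun w _ => hq0 w)).mp hs0
    exact this v (Finset.mem_univ v)
  refine ⟨fun _ => 0, ?_, ?_, ?_, ?_, ?_⟩
  · exact continuousOn_const
  · funext v; exact (hq00 v).symm
  · intro t ht v; exact le_refl 0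
  · intro t ht
    simp only [Pi.zero_apply, Finset.sum_const_zero, hs0, zero_add]
    rw [eq_comm, max_eq_right]
    nlinarith
  · intro t ht hne
    exact absurd rfl hne

theorem rayCase (ha : 0 < a) (hlam : ∀ v, 0 < lam v) (hq0 : ∀ v, 0 ≤ q0 v)
    (hs0 : ∑ v, q0 v = 0) (hS : 1 < ∑ v, lam v) :
    ∃ f : ℝ → V → ℝ, IsCGSolution a lam q0 f := by
  have hq00 : ∀ v, q0 v = 0 := by
    intro v
    have := (Finset.sum_eq_zero_iff_of_nonneg (fun w _ => hq0 w)).mp hs0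
    exact this v (Finset.mem_univ v)
  set S := ∑ v, lam v with hSdef
  -- the implicit function: for K > 0 and v, the unique root of x + x^a/K = lam v in [0, lam v]
  have hroot : ∀ K : ℝ, 0 < K → ∀ v : V, ∃ x, x ∈ Icc (0:ℝ) (lam v) ∧ x + x^a/K = lam v := by
    intro K hK v
    have hcont : ContinuousOn (fun x : ℝ => x + x^a/K) (Icc 0 (lam v)) :=
      (continuous_id.add ((rpow_const_cont ha.le).div_const K)).continuousOn
    have hlv := hlam v
    have h0 : (0:ℝ) + (0:ℝ)^a/K = 0 := by rw [Real.zero_rpow ha.ne']; simp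
    have hiv := intermediate_value_Icc hlv.le hcont
    have hmem : lam v ∈ Icc ((fun x : ℝ => x + x^a/K) 0) ((fun x : ℝ => x + x^a/K) (lam v)) := by
      simp only
      constructor
      · rw [h0]; exact hlv.le
      · have : 0 ≤ (lam v)^a/K := div_nonneg (Real.rpow_nonneg hlv.le a) hK.le
        linarith
    obtain ⟨x, hx, hgx⟩ := hiv hmem
    exact ⟨x, hx, hgx⟩
  have hmono : ∀ K : ℝ, 0 < K → ∀ x y : ℝ, 0 ≤ x → x < y → x + x^a/K < y + y^a/K := by
    intro K hK x y hx hxy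
    have h1 : x^a ≤ y^a := Real.rpow_le_rpow hx hxy.le ha.le
    have h2 : x^a/K ≤ y^a/K := by gcongr
    linarith
  have huniq : ∀ K : ℝ, 0 < K → ∀ v : V, ∀ x y : ℝ,
      (x ∈ Icc (0:ℝ) (lam v) ∧ x + x^a/K = lam v) →
      (y ∈ Icc (0:ℝ) (lam v) ∧ y + y^a/K = lam v) → x = y := by
    intro K hK v x y hx hy
    rcases lt_trichotomy x y with h | h | h
    · have := hmono K hK x y hx.1.1 h
      rw [hx.2, hy.2] at this
      exact absurd this (lt_irrefl _)
    · exact h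
    · have := hmono K hK y x hy.1.1 h
      rw [hx.2, hy.2] at this
      exact absurd this (lt_irrefl _)
  set c : ℝ → V → ℝ := fun K v => if hK : 0 < K then (hroot K hK v).choose else 0 with hcdef
  have hc : ∀ (K : ℝ) (hK : 0 < K) (v : V),
      c K v ∈ Icc (0:ℝ) (lam v) ∧ c K v + (c K v)^a / K = lam v := by
    intro K hK v
    simp only [hcdef, dif_pos hK]
    exact (hroot K hK v).choose_spec
  -- quantitative continuity of c in K
  have hclip_one : ∀ (K1 K K' : ℝ), 0 < K1 → K1 ≤ K → K1 ≤ K' → ∀ v,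
      c K v - c K' v ≤ (lam v)^a * |K - K'| / (K1*K1) := by
    intro K1 K K' hK1 hK hK' v
    have hKp : 0 < K := lt_of_lt_of_le hK1 hK
    have hK'p : 0 < K' := lt_of_lt_of_le hK1 hK'
    set x := c K v with hxd
    set y := c K' v with hyd
    obtain ⟨hxm, hxe⟩ := hc K hKp v
    obtain ⟨hym, hye⟩ := hc K' hK'p v
    rcases le_or_gt x y with h | h
    · refine le_trans (show x - y ≤ 0 by linarith) ?_
      exact div_nonneg (mul_nonneg (Real.rpow_nonneg (hlam v).le a) (abs_nonneg _))
        (by positivity)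
    · -- x > y : x - y = y^a/K' - x^a/K ≤ y^a/K' - y^a/K ≤ |...| ≤ bound
      have hxy : x - y = y^a/K' - x^a/K := by linarith
      have h1 : y^a ≤ x^a := Real.rpow_le_rpow hym.1 h.le ha.le
      have h2 : y^a/K ≤ x^a/K := by gcongr
      have h3 : x - y ≤ y^a/K' - y^a/K := by linarith
      have h4 : y^a/K' - y^a/K = y^a * (K - K') / (K' * K) := by
        field_simp
      have h5 : y^a * (K - K') / (K' * K) ≤ y^a * |K - K'| / (K' * K) := by
        have : y^a * (K - K') ≤ y^a * |K - K'| :=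
          mul_le_mul_of_nonneg_left (le_abs_self _) (Real.rpow_nonneg hym.1 a)
        gcongr
      have h6 : y^a * |K - K'| / (K' * K) ≤ (lam v)^a * |K - K'| / (K1 * K1) := by
        have hy1 : y^a ≤ (lam v)^a := Real.rpow_le_rpow hym.1 hym.2 ha.le
        have hnum : y^a * |K - K'| ≤ (lam v)^a * |K - K'| :=
          mul_le_mul_of_nonneg_right hy1 (abs_nonneg _)
        have hden : K1 * K1 ≤ K' * K := mul_le_mul hK' hK hK1.le hK'p.le
        exact div_le_div₀ (mul_nonneg (Real.rpow_nonneg (hlam v).le a) (abs_nonneg _))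
          hnum (by positivity) hden
      linarith
  have hclip : ∀ (K1 K K' : ℝ), 0 < K1 → K1 ≤ K → K1 ≤ K' → ∀ v,
      |c K v - c K' v| ≤ (lam v)^a * |K - K'| / (K1*K1) := by
    intro K1 K K' hK1 hK hK' v
    rw [abs_le]
    constructor
    · have := hclip_one K1 K' K hK1 hK' hK v
      rw [abs_sub_comm] at this
      linarith
    · exact hclip_one K1 K K' hK1 hK hK' v
  -- continuity of K ↦ c K v on [K1,K2]
  have hccont : ∀ (K1 K2 : ℝ), 0 < K1 → ∀ v,
      ContinuousOn (fun K => c K v) (Icc K1 K2) := by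
    intro K1 K2 hK1 v
    refine LipschitzOnWith.continuousOn
      (K := Real.toNNReal ((lam v)^a / (K1*K1))) ?_
    refine LipschitzOnWith.of_dist_le_mul fun x hx y hy => ?_
    rw [Real.dist_eq, Real.dist_eq, Real.coe_toNNReal _
      (div_nonneg (Real.rpow_nonneg (hlam v).le a) (by positivity))]
    have := hclip K1 x y hK1 hx.1 hy.1 v
    calc |c x v - c y v| ≤ (lam v)^a * |x - y| / (K1*K1) := this
      _ = (lam v)^a / (K1*K1) * |x - y| := by ring
  -- choice of interval [K1, K2] for the IVT
  set B := ∑ v : V, (lam v + 1) ^ (1/a) with hBdef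
  have hB : 0 < B := Finset.sum_pos
    (fun v _ => Real.rpow_pos_of_pos (by linarith [hlam v]) _) Finset.univ_nonempty
  have hS1 : 0 < S - 1 := by linarith
  set K1 : ℝ := min 1 (((S-1)/(2*B))^a) with hK1def
  have hK1pos : 0 < K1 :=
    lt_min one_pos (Real.rpow_pos_of_pos (by positivity) a)
  set K2 : ℝ := max K1 ((∑ v, (lam v)^a) + 1) with hK2def
  have hK1K2 : K1 ≤ K2 := le_max_left _ _
  set G : ℝ → ℝ := fun K => ∑ v, c K v with hGdef
  have hGcont : ContinuousOn G (Icc K1 K2) :=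
    continuousOn_finset_sum _ (fun v _ => hccont K1 K2 hK1pos v)
  have hGK1 : G K1 ≤ S - 1 := by
    have hcle : ∀ v, c K1 v ≤ ((S-1)/(2*B)) * (lam v + 1)^(1/a) := by
      intro v
      obtain ⟨hm, he⟩ := hc K1 hK1pos v
      have hpow : (c K1 v)^a = K1 * (lam v - c K1 v) := by
        have h0 : (c K1 v)^a / K1 = lam v - c K1 v := by linarith
        field_simp at h0
        linear_combination h0
      have h1 : (c K1 v)^a ≤ K1 * lam v := by
        rw [hpow]
        have := hm.1
        nlinarith [hlam v, hK1pos]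
      have h2 : c K1 v ≤ (K1 * lam v)^(1/a) := by
        have h3 : ((c K1 v)^a)^(1/a) ≤ (K1 * lam v)^(1/a) :=
          Real.rpow_le_rpow (Real.rpow_nonneg hm.1 a) h1 (one_div_nonneg.mpr ha.le)
        rw [one_div] at h3 ⊢
        rwa [Real.rpow_rpow_inv hm.1 ha.ne'] at h3
      refine le_trans h2 ?_
      rw [Real.mul_rpow hK1pos.le (hlam v).le]
      have h4 : K1^(1/a) ≤ (S-1)/(2*B) := by
        have h5 : K1 ≤ ((S-1)/(2*B))^a := min_le_right _ _
        have h6 : K1^(1/a) ≤ (((S-1)/(2*B))^a)^(1/a) :=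
          Real.rpow_le_rpow hK1pos.le h5 (one_div_nonneg.mpr ha.le)
        rw [one_div] at h6 ⊢
        rwa [Real.rpow_rpow_inv (div_nonneg hS1.le (by positivity)) ha.ne'] at h6
      have h7 : (lam v)^(1/a) ≤ (lam v + 1)^(1/a) :=
        Real.rpow_le_rpow (hlam v).le (by linarith) (one_div_nonneg.mpr ha.le)
      have h8 : (0:ℝ) ≤ (lam v)^(1/a) := Real.rpow_nonneg (hlam v).le _
      have h9 : (0:ℝ) ≤ (S-1)/(2*B) := by positivity
      calc K1^(1/a) * (lam v)^(1/a) ≤ ((S-1)/(2*B)) * (lam v)^(1/a) :=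
            mul_le_mul_of_nonneg_right h4 h8
        _ ≤ ((S-1)/(2*B)) * (lam v + 1)^(1/a) := mul_le_mul_of_nonneg_left h7 h9
    calc G K1 ≤ ∑ v, ((S-1)/(2*B)) * (lam v + 1)^(1/a) := Finset.sum_le_sum fun v _ => hcle v
      _ = ((S-1)/(2*B)) * B := by rw [← Finset.mul_sum, hBdef]
      _ = (S-1)/2 := by field_simp
      _ ≤ S - 1 := by linarith
  have hGK2 : S - 1 ≤ G K2 := by
    have hK2pos : 0 < K2 := lt_of_lt_of_le hK1pos hK1K2
    have hK2ge : (∑ v, (lam v)^a) + 1 ≤ K2 := le_max_right _ _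
    have hsumpos : 0 < (∑ v, (lam v)^a) + 1 := by
      have : (0:ℝ) ≤ ∑ v, (lam v)^a :=
        Finset.sum_nonneg fun v _ => Real.rpow_nonneg (hlam v).le a
      linarith
    have hcge : ∀ v, lam v - (lam v)^a / K2 ≤ c K2 v := by
      intro v
      obtain ⟨hm, he⟩ := hc K2 hK2pos v
      have h1 : (c K2 v)^a ≤ (lam v)^a := Real.rpow_le_rpow hm.1 hm.2 ha.le
      have h2 : (c K2 v)^a / K2 ≤ (lam v)^a / K2 := by gcongr
      linarith
    have h3 : ∑ v, (lam v - (lam v)^a / K2) ≤ G K2 := Finset.sum_le_sum fun v _ => hcge v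
    rw [Finset.sum_sub_distrib] at h3
    have h4 : ∑ v, (lam v)^a / K2 = (∑ v, (lam v)^a) / K2 := by rw [Finset.sum_div]
    have h5 : (∑ v, (lam v)^a) / K2 ≤ (∑ v, (lam v)^a) / ((∑ v, (lam v)^a) + 1) := by
      gcongr
      exact Finset.sum_nonneg fun v _ => Real.rpow_nonneg (hlam v).le a
    have h6 : (∑ v, (lam v)^a) / ((∑ v, (lam v)^a) + 1) < 1 := by
      rw [div_lt_one hsumpos]
      linarith
    rw [h4] at h3
    have : S - 1 ≤ S - (∑ v, (lam v)^a) / K2 := by linarith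
    exact le_trans this (by linarith [h3])
  obtain ⟨Kstar, hKmem, hGK⟩ := intermediate_value_Icc hK1K2 hGcont ⟨hGK1, hGK2⟩
  have hKpos : 0 < Kstar := lt_of_lt_of_le hK1pos hKmem.1
  set cv : V → ℝ := fun v => c Kstar v with hcvdef
  have hcv : ∀ v, cv v ∈ Icc (0:ℝ) (lam v) ∧ cv v + (cv v)^a / Kstar = lam v :=
    fun v => hc Kstar hKpos v
  have hsumc : ∑ v, cv v = S - 1 := hGK
  have hpow : ∀ v, (cv v)^a = Kstar * (lam v - cv v) := by
    intro v
    obtain ⟨hm, he⟩ := hcv v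
    have h0 : (cv v)^a / Kstar = lam v - cv v := by linarith
    field_simp at h0
    linear_combination h0
  have hsum_pow : ∑ v, (cv v)^a = Kstar := by
    rw [Finset.sum_congr rfl (fun v _ => hpow v), ← Finset.mul_sum]
    rw [Finset.sum_sub_distrib, hsumc, ← hSdef]
    ring
  -- the ray solution
  refine ⟨fun t => fun v => t * cv v, ?_, ?_, ?_, ?_, ?_⟩
  · exact (continuous_pi fun v => continuous_id.mul continuous_const).continuousOn
  · funext v
    rw [hq00 v]
    ring
  · intro t ht v
    exact mul_nonneg ht ((hcv v).1.1)
  · intro t ht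
    rw [hs0, zero_add, ← hSdef]
    have h1 : ∑ v, t * cv v = t * (S - 1) := by rw [← Finset.mul_sum, hsumc]
    rw [h1, max_eq_left (by nlinarith)]
    ring
  · intro t ht hne
    have hD : HasDerivAt (fun t => fun v => t * cv v) (fun v => cv v) t := by
      rw [hasDerivAt_pi]
      intro v
      simpa using (hasDerivAt_id t).mul_const (cv v)
    have heq : gdrift a lam (fun v => t * cv v) = fun v => cv v := by
      funext v
      simp only [gdrift]
      have h1 : ∀ w, (t * cv w)^a = t^a * (cv w)^a :=
        fun w => Real.mul_rpow ht.le ((hcv w).1.1)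
      rw [h1 v]
      have h2 : ∑ w, (t * cv w)^a = t^a * Kstar := by
        rw [Finset.sum_congr rfl (fun w _ => h1 w), ← Finset.mul_sum, hsum_pow]
      rw [h2]
      have hta : t^a ≠ 0 := (Real.rpow_pos_of_pos ht a).ne'
      rw [mul_div_mul_left _ _ hta]
      obtain ⟨hm, he⟩ := hcv v
      linarith
    rw [heq]
    exact hD


end withNE
end CGExist

/-- the complete-graph initial value problem has a solution for every
initial condition `q⁰ ∈ [0,∞)^V`. -/
theorem cgSolution_exists {V : Type*} [Fintype V] [Nonempty V]
    (a : ℝ) (ha : 0 < a) (lam : V → ℝ) (hlam : ∀ v, 0 < lam v)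
    (q0 : V → ℝ) (hq0 : ∀ v, 0 ≤ q0 v) :
    ∃ f : ℝ → V → ℝ, IsCGSolution a lam q0 f := by
  have hs0' : 0 ≤ ∑ v, q0 v := Finset.sum_nonneg fun v _ => hq0 v
  rcases lt_or_eq_of_le hs0' with hpos | heq0
  · exact CGExist.mainCase ha hlam hq0 hpos
  · rcases le_or_gt (∑ v, lam v) 1 with hS | hS
    · exact CGExist.trivialCase hq0 heq0.symm hS
    · exact CGExist.rayCase ha hlam hq0 heq0.symm hS
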